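/- arXiv:2207.12179 — 11 statements merged into one kernel-verified Lean document; each statement's English description precedes it below -/
import Mathlib

section
/- In a college admissions market with a single common strict priority order over students, the unique stable matching is Pareto efficient for students: there is no other matching that makes every student weakly better off and some student strictly better off. -/
open Finset
open scoped Classical

/-- A common-priority college admissions market: `n` students (index `0` is the
highest priority / highest score), `m` colleges with capacities `q`, and for each
student an injective ranking of the options in `Option (Fin m)` (`none` = being
unassigned / matched to oneself); a lower rank means more preferred. -/
structure Market (n m : ℕ) where
  q : Fin m → ℕ
  rank : Fin n → Option (Fin m) → ℕ
  rank_inj : ∀ i, Function.Injective (rank i)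

namespace Market

variable {n m : ℕ}

/-- `i` strictly prefers option `a` to option `b`. -/
def Prefers (M : Market n m) (i : Fin n) (a b : Option (Fin m)) : Prop :=
  M.rank i a < M.rank i b

/-- A matching: each student gets a college or `none`, capacities respected. -/
def IsMatching (M : Market n m) (μ : Fin n → Option (Fin m)) : Prop :=
  ∀ c : Fin m, (univ.filter fun i => μ i = some c).card ≤ M.q c

/-- Individual rationality. -/
def IR (M : Market n m) (μ : Fin n → Option (Fin m)) : Prop :=
  ∀ i c, μ i = some c → M.Prefers i (some c) none

/-- `(i, c)` blocks `μ`: `i` prefers `c` to her assignment and `c` has a free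
seat or holds a student of strictly lower priority. -/
def Blocks (M : Market n m) (μ : Fin n → Option (Fin m)) (i : Fin n) (c : Fin m) : Prop :=
  M.Prefers i (some c) (μ i) ∧
    ((univ.filter fun j => μ j = some c).card < M.q c ∨ ∃ j, μ j = some c ∧ i < j)

/-- Stability: a matching, individually rational, with no blocking pair. -/
def Stable (M : Market n m) (μ : Fin n → Option (Fin m)) : Prop :=
  M.IsMatching μ ∧ M.IR μ ∧ ∀ i c, ¬ M.Blocks μ i c

/-- Given an application profile, student `i` is tentatively held: she applies to
some college `c` and fewer than `q c` higher-priority students apply to `c`. -/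
def Held (M : Market n m) (app : Fin n → Option (Fin m)) (i : Fin n) : Prop :=
  ∃ c, app i = some c ∧ (univ.filter fun j => app j = some c ∧ j < i).card < M.q c

/-- The tentative matching induced by an application profile. -/
noncomputable def tentative (M : Market n m) (app : Fin n → Option (Fin m)) (i : Fin n) :
    Option (Fin m) :=
  if M.Held app i then app i else none

/-- `i` meets the current cutoff of `c`: `c` has a free seat in the tentative
matching, or tentatively holds a student of lower priority than `i`. -/
def Feasible (M : Market n m) (app : Fin n → Option (Fin m)) (i : Fin n) (c : Fin m) : Prop :=
  (univ.filter fun j => M.tentative app j = some c).card < M.q c ∨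
    ∃ j, M.tentative app j = some c ∧ i < j

/-- The option `o` is available to `i`: `none` always is, a college iff `i`
meets its cutoff. -/
def FeasibleOpt (M : Market n m) (app : Fin n → Option (Fin m)) (i : Fin n)
    (o : Option (Fin m)) : Prop :=
  o = none ∨ ∃ c, o = some c ∧ M.Feasible app i c

/-- One round of simultaneous straightforward revision: students who are not
rejected keep their application; every rejected student applies to her most
preferred option among those whose cutoff she meets. -/
def Step (M : Market n m) (app app' : Fin n → Option (Fin m)) : Prop :=
  ∀ i,
    (M.tentative app i = app i → app' i = app i) ∧
    (M.tentative app i ≠ app i →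
      M.FeasibleOpt app i (app' i) ∧
        ∀ o, M.FeasibleOpt app i o → M.rank i (app' i) ≤ M.rank i o)

/-- A run of the TCDM under straightforward strategies: `app t` is the profile of
applications in round `t + 1`; in round one every student applies to her most
preferred option, and each later round is a straightforward revision.  The
outcome of the TCDM with round limit `T ≥ 1` is `M.tentative (app (T - 1))`. -/
def IsRun (M : Market n m) (app : ℕ → Fin n → Option (Fin m)) : Prop :=
  (∀ i o, M.rank i (app 0 i) ≤ M.rank i o) ∧ ∀ t, M.Step (app t) (app (t + 1))

/-- Admission cutoff of college `c` (student `i` has score `n - i`): the lowest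
score among tentatively held students if `c` is at capacity, `0` otherwise. -/
noncomputable def cutoff (M : Market n m) (app : Fin n → Option (Fin m)) (c : Fin m) : ℕ :=
  if h : M.q c ≤ (univ.filter fun j => M.tentative app j = some c).card ∧
      (univ.filter fun j => M.tentative app j = some c).Nonempty then
    n - ((univ.filter fun j => M.tentative app j = some c).max' h.2 : ℕ)
  else 0

/-- Serial dictatorship outcome: in priority order each student receives her most
preferred option among `none` and the colleges not yet filled by
higher-priority students. -/
def IsSerialDictatorship (M : Market n m) (μ : Fin n → Option (Fin m)) : Prop :=
  ∀ i,
    (μ i = none ∨ ∃ c, μ i = some c ∧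
        (univ.filter fun j => j < i ∧ μ j = some c).card < M.q c) ∧
    ∀ o, (o = none ∨ ∃ c, o = some c ∧
        (univ.filter fun j => j < i ∧ μ j = some c).card < M.q c) →
      M.rank i (μ i) ≤ M.rank i o

end Market

/-- The market induced by capacities `q` and a profile `P` of strict preferences
over colleges (every college acceptable, `none` ranked last), where the
preference order of student `i` ranks college `c` in position `P i c`. -/
noncomputable def mkMarket {n m : ℕ} (q : Fin m → ℕ) (P : Fin n → Equiv.Perm (Fin m)) :
    Market n m where
  q := q
  rank := fun i o => o.elim m fun c => (P i c : ℕ)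
  rank_inj := by
    intro i a b h
    match a, b with
    | none, none => rfl
    | none, some c =>
      simp only [Option.elim] at h
      exact absurd h.symm (Nat.ne_of_lt (P i c).isLt)
    | some c, none =>
      simp only [Option.elim] at h
      exact absurd h (Nat.ne_of_lt (P i c).isLt)
    | some c, some d =>
      simp only [Option.elim] at h
      exact congrArg some ((P i).injective (Fin.val_injective h))

/-- the unique stable matching is Pareto efficient for students. -/
theorem stable_matching_pareto_efficient (n m : ℕ) (M : Market n m)
    (μ : Fin n → Option (Fin m)) (hμ : M.Stable μ) :
    ¬ ∃ ν : Fin n → Option (Fin m), M.IsMatching ν ∧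
      (∀ i, M.rank i (ν i) ≤ M.rank i (μ i)) ∧
      ∃ i, M.rank i (ν i) < M.rank i (μ i) := by
  rintro ⟨ν, hνm, hdom, i0, hi0⟩
  obtain ⟨hmatch, hIR, hnb⟩ := hμ
  set S : Finset (Fin n) := univ.filter (fun i => ν i ≠ μ i) with hS
  have hne : S.Nonempty := ⟨i0, by simp [hS]; intro h; rw [h] at hi0; exact lt_irrefl _ hi0⟩
  set i := S.min' hne with hidef
  have hiS : i ∈ S := S.min'_mem hne
  have hi : ν i ≠ μ i := by simpa [hS] using hiS
  have hmin : ∀ j, j < i → ν j = μ j := by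
    intro j hj
    by_contra h
    exact absurd (S.min'_le j (by simp [hS, h])) (not_le.mpr hj)
  have hstrict : M.rank i (ν i) < M.rank i (μ i) :=
    lt_of_le_of_ne (hdom i) (fun h => hi (M.rank_inj i h))
  obtain ⟨c, hc⟩ : ∃ c, ν i = some c := by
    rcases hν : ν i with _ | c
    · rcases hμi : μ i with _ | c'
      · rw [hν, hμi] at hstrict; exact absurd rfl (ne_of_lt hstrict)
      · have := hIR i c' hμi
        rw [hν, hμi] at hstrict
        exact absurd hstrict (not_lt.mpr (le_of_lt this))
    · exact ⟨c, rfl⟩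
  have hμic : μ i ≠ some c := fun h => hi (by rw [hc, h])
  apply hnb i c
  refine ⟨by rw [← hc]; exact hstrict, ?_⟩
  by_cases hcard : (univ.filter fun j => μ j = some c).card < M.q c
  · exact Or.inl hcard
  by_cases hex : ∃ j, μ j = some c ∧ i < j
  · exact Or.inr hex
  exfalso
  push_neg at hex
  have hsub : insert i (univ.filter fun j => μ j = some c) ⊆
      (univ.filter fun j => ν j = some c) := by
    intro j hj
    rcases Finset.mem_insert.mp hj with rfl | hj
    · simp [hc]
    · simp only [mem_filter, mem_univ, true_and] at hj ⊢
      have hji : j < i := lt_of_le_of_ne (hex j hj) (fun h => hμic (h ▸ hj))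
      rw [hmin j hji]; exact hj
  have hni : i ∉ (univ.filter fun j => μ j = some c) := by simp [hμic]
  have := Finset.card_le_card hsub
  rw [Finset.card_insert_of_notMem hni] at this
  have := le_trans this (hνm c)
  omega
end

section
/- In the time-constrained dynamic mechanism where all students follow straightforward strategies, if the mechanism halts because no student changes her application (before the round limit T is reached), then the resulting matching is the unique stable matching. -/
open Finset
open scoped Classical

section Aux

variable {n m : ℕ}

lemma countBelow_mono (A : Finset (Fin n)) {i j : Fin n} (h : i ≤ j) :
    (A.filter (· < i)).card ≤ (A.filter (· < j)).card := by
  apply Finset.card_le_card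
  intro k hk
  simp only [Finset.mem_filter] at hk ⊢
  exact ⟨hk.1, lt_of_lt_of_le hk.2 h⟩

lemma countBelow_lt (A : Finset (Fin n)) {i j : Fin n} (hi : i ∈ A) (h : i < j) :
    (A.filter (· < i)).card < (A.filter (· < j)).card := by
  apply Finset.card_lt_card
  constructor
  · intro k hk
    simp only [Finset.mem_filter] at hk ⊢
    exact ⟨hk.1, lt_trans hk.2 h⟩
  · intro hsub
    have := hsub (by simp only [Finset.mem_filter]; exact ⟨hi, h⟩)
    simp only [Finset.mem_filter] at this
    exact lt_irrefl i this.2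

lemma countBelow_lt_card (A : Finset (Fin n)) {i : Fin n} (hi : i ∈ A) :
    (A.filter (· < i)).card < A.card := by
  apply Finset.card_lt_card
  refine ⟨Finset.filter_subset _ _, fun hsub => ?_⟩
  have := hsub hi
  simp only [Finset.mem_filter] at this
  exact lt_irrefl i this.2

lemma countBelow_injOn (A : Finset (Fin n)) :
    Set.InjOn (fun j => (A.filter (· < j)).card) A := by
  intro a ha b hb hab
  by_contra hne
  rcases lt_or_gt_of_ne hne with h | h
  · exact absurd hab (ne_of_lt (countBelow_lt A (Finset.mem_coe.mp ha) h))
  · exact absurd hab.symm (ne_of_lt (countBelow_lt A (Finset.mem_coe.mp hb) h))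

lemma exists_countBelow (A : Finset (Fin n)) {k : ℕ} (hk : k < A.card) :
    ∃ j ∈ A, (A.filter (· < j)).card = k := by
  have himg : A.image (fun j => (A.filter (· < j)).card) = Finset.range A.card := by
    apply Finset.eq_of_subset_of_card_le
    · intro x hx
      simp only [Finset.mem_image] at hx
      obtain ⟨j, hj, rfl⟩ := hx
      exact Finset.mem_range.mpr (countBelow_lt_card A hj)
    · rw [Finset.card_range, Finset.card_image_of_injOn (countBelow_injOn A)]
  have : k ∈ A.image (fun j => (A.filter (· < j)).card) :=
    himg ▸ Finset.mem_range.mpr hk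
  simpa using this

lemma tentative_eq_some_iff (M : Market n m) (app : Fin n → Option (Fin m))
    (j : Fin n) (c : Fin m) :
    M.tentative app j = some c ↔
      app j = some c ∧
        (((univ : Finset (Fin n)).filter fun k => app k = some c).filter
          (· < j)).card < M.q c := by
  rw [Finset.filter_filter]
  unfold Market.tentative
  constructor
  · intro h
    by_cases hh : M.Held app j
    · rw [if_pos hh] at h
      obtain ⟨c', hc', hcard⟩ := hh
      rw [h] at hc'
      injection hc' with hcc
      subst hcc
      exact ⟨h, hcard⟩
    · rw [if_neg hh] at h
      exact absurd h (by simp)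
  · rintro ⟨h1, h2⟩
    rw [if_pos ⟨c, h1, h2⟩]
    exact h1

lemma held_card_le (M : Market n m) (app : Fin n → Option (Fin m)) (c : Fin m) :
    ((univ : Finset (Fin n)).filter fun j => M.tentative app j = some c).card ≤ M.q c := by
  set A := (univ : Finset (Fin n)).filter fun k => app k = some c with hA
  rw [← Finset.card_range (M.q c)]
  apply Finset.card_le_card_of_injOn (fun j => (A.filter (· < j)).card)
  · intro j hj
    simp only [Finset.mem_coe, Finset.mem_filter] at hj
    rw [tentative_eq_some_iff] at hj
    exact Finset.mem_range.mpr hj.2.2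
  · intro a ha b hb hab
    apply countBelow_injOn A _ _ hab
    · simp only [Finset.coe_filter, Set.mem_setOf_eq] at ha
      rw [tentative_eq_some_iff] at ha
      simp only [hA, Finset.coe_filter, Set.mem_setOf_eq, Finset.mem_univ, true_and]
      first | exact ha.1 | exact ha.2.1
    · simp only [Finset.coe_filter, Set.mem_setOf_eq] at hb
      rw [tentative_eq_some_iff] at hb
      simp only [hA, Finset.coe_filter, Set.mem_setOf_eq, Finset.mem_univ, true_and]
      first | exact hb.1 | exact hb.2.1

lemma held_card_ge (M : Market n m) (app : Fin n → Option (Fin m)) (c : Fin m)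
    (h : M.q c ≤ ((univ : Finset (Fin n)).filter fun k => app k = some c).card) :
    M.q c ≤ ((univ : Finset (Fin n)).filter fun j => M.tentative app j = some c).card := by
  set A := (univ : Finset (Fin n)).filter fun k => app k = some c with hA
  set H := (univ : Finset (Fin n)).filter fun j => M.tentative app j = some c with hH
  have hsub : Finset.range (M.q c) ⊆ H.image (fun j => (A.filter (· < j)).card) := by
    intro k hk
    rw [Finset.mem_range] at hk
    obtain ⟨j, hjA, hjk⟩ := exists_countBelow A (lt_of_lt_of_le hk h)
    refine Finset.mem_image.mpr ⟨j, ?_, hjk⟩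
    rw [hH, Finset.mem_filter]
    refine ⟨Finset.mem_univ _, (tentative_eq_some_iff M app j c).mpr ⟨?_, ?_⟩⟩
    · rw [hA, Finset.mem_filter] at hjA
      exact hjA.2
    · rw [hjk]
      exact hk
  calc M.q c = (Finset.range (M.q c)).card := (Finset.card_range _).symm
    _ ≤ (H.image (fun j => (A.filter (· < j)).card)).card := Finset.card_le_card hsub
    _ ≤ H.card := Finset.card_image_le

lemma not_feasible_of_countBelow (M : Market n m) (app : Fin n → Option (Fin m))
    (i : Fin n) (c : Fin m)
    (h : M.q c ≤ (((univ : Finset (Fin n)).filter fun k => app k = some c).filter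
      (· < i)).card) :
    ¬ M.Feasible app i c := by
  rintro (hlt | ⟨j, hj, hij⟩)
  · have hAcard : M.q c ≤ ((univ : Finset (Fin n)).filter fun k => app k = some c).card :=
      le_trans h (Finset.card_le_card (Finset.filter_subset _ _))
    exact absurd (held_card_ge M app c hAcard) (not_le.mpr hlt)
  · rw [tentative_eq_some_iff] at hj
    have := countBelow_mono ((univ : Finset (Fin n)).filter fun k => app k = some c)
      (le_of_lt hij)
    have h2 := hj.2
    omega

lemma feasible_mono (M : Market n m) {app app' : Fin n → Option (Fin m)}
    (hstep : M.Step app app') (i : Fin n) (c : Fin m)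
    (h : ¬ M.Feasible app i c) : ¬ M.Feasible app' i c := by
  unfold Market.Feasible at h
  push_neg at h
  obtain ⟨hcard, hbelow⟩ := h
  have hHsub : ∀ j, M.tentative app j = some c → app' j = some c := by
    intro j hj
    have h1 : app j = some c := ((tentative_eq_some_iff M app j c).mp hj).1
    have h2 : M.tentative app j = app j := by rw [hj, h1]
    rw [(hstep j).1 h2, h1]
  have hA' : M.q c ≤ ((univ : Finset (Fin n)).filter fun k => app' k = some c).card := by
    refine le_trans hcard (Finset.card_le_card ?_)
    intro j hj
    simp only [Finset.mem_filter] at hj ⊢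
    exact ⟨Finset.mem_univ _, hHsub j hj.2⟩
  rintro (hlt | ⟨j', hj', hij'⟩)
  · exact absurd (held_card_ge M app' c hA') (not_le.mpr hlt)
  · rw [tentative_eq_some_iff] at hj'
    have hle : M.q c ≤ (((univ : Finset (Fin n)).filter fun k => app' k = some c).filter
        (· < j')).card := by
      refine le_trans hcard (Finset.card_le_card ?_)
      intro j hj
      simp only [Finset.mem_filter] at hj ⊢
      exact ⟨⟨Finset.mem_univ _, hHsub j hj.2⟩, lt_of_le_of_lt (hbelow j hj.2) hij'⟩
    have h2 := hj'.2
    omega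

lemma run_opt (M : Market n m) (app : ℕ → Fin n → Option (Fin m)) (hrun : M.IsRun app) :
    ∀ t i o, M.FeasibleOpt (app t) i o → M.rank i (app t i) ≤ M.rank i o := by
  intro t
  induction t with
  | zero => intro i o _; exact hrun.1 i o
  | succ t ih =>
    intro i o ho
    have ho' : M.FeasibleOpt (app t) i o := by
      rcases ho with rfl | ⟨c, rfl, hc⟩
      · exact Or.inl rfl
      · refine Or.inr ⟨c, rfl, ?_⟩
        by_contra hnc
        exact feasible_mono M (hrun.2 t) i c hnc hc
    by_cases hi : M.tentative (app t) i = app t i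
    · rw [(hrun.2 t i).1 hi]
      exact ih i o ho'
    · exact ((hrun.2 t i).2 hi).2 o ho'

lemma fixed_point_settled (M : Market n m) {app app' : Fin n → Option (Fin m)}
    (hstep : M.Step app app') (heq : app' = app) (i : Fin n) :
    M.tentative app i = app i := by
  by_contra hi
  have h2 := (hstep i).2 hi
  rw [heq] at h2
  have hne : app i ≠ none := by
    intro h0
    apply hi
    unfold Market.tentative
    split
    · rename_i hh
      obtain ⟨c, hc, _⟩ := hh
      simp [h0] at hc
    · exact h0.symm
  obtain ⟨c, hc⟩ := Option.ne_none_iff_exists'.mp hne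
  have hnh : ¬ M.Held app i := by
    intro hh
    apply hi
    unfold Market.tentative
    rw [if_pos hh]
  rcases h2.1 with h0 | ⟨c', hc', hfc⟩
  · exact hne h0
  · rw [hc] at hc'
    injection hc' with hcc
    subst hcc
    unfold Market.Held at hnh
    push_neg at hnh
    have hq := hnh c hc
    refine not_feasible_of_countBelow M app i c ?_ hfc
    rw [Finset.filter_filter]
    exact hq

lemma stable_not_prefers (M : Market n m) {μ ν : Fin n → Option (Fin m)}
    (hμ : M.Stable μ) (hν : M.Stable ν) (i : Fin n)
    (ih : ∀ j, j < i → μ j = ν j) : ¬ M.Prefers i (μ i) (ν i) := by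
  intro hp
  cases hμi : μ i with
  | none =>
    rw [hμi] at hp
    cases hνi : ν i with
    | none => rw [hνi] at hp; exact lt_irrefl _ hp
    | some c =>
      rw [hνi] at hp
      exact absurd (hν.2.1 i c hνi) (not_lt.mpr (le_of_lt hp))
  | some c =>
    rw [hμi] at hp
    have hnb := hν.2.2 i c
    unfold Market.Blocks at hnb
    push_neg at hnb
    obtain ⟨hcard, hall⟩ := hnb hp
    have hνi : ν i ≠ some c := by
      intro h
      rw [h] at hp
      exact lt_irrefl _ hp
    have hsub : insert i ((univ : Finset (Fin n)).filter fun j => ν j = some c) ⊆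
        (univ : Finset (Fin n)).filter fun j => μ j = some c := by
      intro j hj
      simp only [Finset.mem_insert, Finset.mem_filter] at hj
      simp only [Finset.mem_filter]
      refine ⟨Finset.mem_univ _, ?_⟩
      rcases hj with rfl | hj
      · exact hμi
      · have hne' : j ≠ i := fun he => hνi (he ▸ hj.2)
        have hji : j < i := lt_of_le_of_ne (hall j hj.2) hne'
        exact (ih j hji).trans hj.2
    have hnotmem : i ∉ ((univ : Finset (Fin n)).filter fun j => ν j = some c) := by
      simp only [Finset.mem_filter]
      exact fun h => hνi h.2
    have hcards := Finset.card_le_card hsub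
    rw [Finset.card_insert_of_notMem hnotmem] at hcards
    have hm := hμ.1 c
    omega

end Aux

/-- if the TCDM (all students following straightforward strategies)
halts because no student changes her application before the round limit `T` is
reached, the resulting matching is the unique stable matching. -/
theorem tcdm_halt_is_unique_stable (n m : ℕ) (M : Market n m)
    (app : ℕ → Fin n → Option (Fin m)) (hrun : M.IsRun app)
    (T t : ℕ) (ht : t + 1 < T) (hhalt : app (t + 1) = app t) :
    M.Stable (M.tentative (app t)) ∧
      ∀ μ : Fin n → Option (Fin m), M.Stable μ → μ = M.tentative (app t) := by
  have hfix : ∀ i, M.tentative (app t) i = app t i :=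
    fun i => fixed_point_settled M (hrun.2 t) hhalt i
  have hopt := run_opt M app hrun t
  have hstable : M.Stable (M.tentative (app t)) := by
    refine ⟨fun c => held_card_le M (app t) c, ?_, ?_⟩
    · intro i c hc
      rw [hfix i] at hc
      have h1 : M.rank i (app t i) ≤ M.rank i none := hopt i none (Or.inl rfl)
      rw [hc] at h1
      exact lt_of_le_of_ne h1 (fun he => Option.some_ne_none c (M.rank_inj i he))
    · rintro i c ⟨hp, hfc⟩
      have hfo : M.FeasibleOpt (app t) i (some c) := Or.inr ⟨c, rfl, hfc⟩
      have hle := hopt i (some c) hfo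
      rw [hfix i] at hp
      exact absurd hle (not_le.mpr hp)
  refine ⟨hstable, fun ν hν => ?_⟩
  suffices h : ∀ k : ℕ, ∀ i : Fin n, i.val = k → ν i = M.tentative (app t) i by
    funext i
    exact h i.val i rfl
  intro k
  induction k using Nat.strong_induction_on with
  | _ k ihk =>
    rintro i rfl
    have ih : ∀ j, j < i → ν j = M.tentative (app t) j :=
      fun j hj => ihk j.val hj j rfl
    by_contra hne
    have hrne : M.rank i (ν i) ≠ M.rank i (M.tentative (app t) i) :=
      fun he => hne (M.rank_inj i he)
    rcases lt_or_gt_of_ne hrne with h | h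
    · exact stable_not_prefers M hν hstable i ih h
    · exact stable_not_prefers M hstable hν i (fun j hj => (ih j hj).symm) h
end

section
/- When students follow straightforward strategies and the round limit is not binding, the time-constrained dynamic mechanism terminates and its outcome equals the outcome of the student-proposing deferred acceptance algorithm applied to the true preferences. -/
open Finset
open scoped Classical

namespace TCDM

open Finset Market
open scoped Classical

variable {n m : ℕ} (M : Market n m)

/-- Number of students below `i` applying to `c`. -/
noncomputable def cnt (app : Fin n → Option (Fin m)) (i : Fin n) (c : Fin m) : ℕ :=
  ((univ : Finset (Fin n)).filter fun j => app j = some c ∧ j < i).card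

lemma held_iff {app : Fin n → Option (Fin m)} {i : Fin n} :
    M.Held app i ↔ ∃ c, app i = some c ∧ cnt app i c < M.q c := Iff.rfl

lemma cnt_mono {app : Fin n → Option (Fin m)} {i j : Fin n} (h : i ≤ j) (c : Fin m) :
    cnt app i c ≤ cnt app j c := by
  apply Finset.card_le_card
  intro k hk
  simp only [mem_filter] at hk ⊢
  exact ⟨hk.1, hk.2.1, lt_of_lt_of_le hk.2.2 h⟩

lemma tentative_eq_some_iff {app : Fin n → Option (Fin m)} {j : Fin n} {c : Fin m} :
    M.tentative app j = some c ↔ app j = some c ∧ cnt app j c < M.q c := by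
  unfold Market.tentative
  split_ifs with h
  · constructor
    · intro hj
      obtain ⟨c', hc', hlt⟩ := h
      rw [hj] at hc'
      obtain rfl : c = c' := Option.some_injective _ hc'
      exact ⟨hj, hlt⟩
    · exact fun h' => h'.1
  · constructor
    · intro h'; exact absurd h' (by simp)
    · intro h'; exact absurd ⟨c, h'.1, h'.2⟩ h


/-- Gadget: if at least `q c` students below `i` apply to `c`, then at least
`q c` students below `i` are tentatively held at `c`. -/
lemma gadget {app : Fin n → Option (Fin m)} {i : Fin n} {c : Fin m}
    (h : M.q c ≤ cnt app i c) :
    M.q c ≤ ((univ : Finset (Fin n)).filter fun j =>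
      M.tentative app j = some c ∧ j < i).card := by
  classical
  set A : Finset (Fin n) := univ.filter fun j => app j = some c ∧ j < i with hA
  set N : Finset (Fin n) := A.filter fun j => M.q c ≤ cnt app j c with hN
  by_cases hNe : N.Nonempty
  · set j0 : Fin n := N.min' hNe with hj0
    have hj0N : j0 ∈ N := N.min'_mem hNe
    have hj0A : j0 ∈ A := (mem_filter.mp hj0N).1
    have hj0cnt : M.q c ≤ cnt app j0 c := (mem_filter.mp hj0N).2
    have hj0i : j0 < i := (mem_filter.mp (hA ▸ hj0A)).2.2
    have hsub : (univ.filter fun k => app k = some c ∧ k < j0) ⊆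
        univ.filter fun j => M.tentative app j = some c ∧ j < i := by
      intro k hk
      simp only [mem_filter, mem_univ, true_and] at hk ⊢
      have hki : k < i := lt_trans hk.2 hj0i
      have hkA : k ∈ A := by simp [hA, hk.1, hki]
      have hkN : k ∉ N := fun hkN => absurd (N.min'_le k hkN) (not_le.mpr hk.2)
      have hkcnt : cnt app k c < M.q c := by
        by_contra hle
        exact hkN (mem_filter.mpr ⟨hkA, not_lt.mp (fun h' => hle h')⟩)
      exact ⟨(tentative_eq_some_iff M).mpr ⟨hk.1, hkcnt⟩, hki⟩
    calc M.q c ≤ cnt app j0 c := hj0cnt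
      _ ≤ _ := Finset.card_le_card hsub
  · have hsub : A ⊆ univ.filter fun j => M.tentative app j = some c ∧ j < i := by
      intro k hk
      have hk' := mem_filter.mp hk
      have hkcnt : cnt app k c < M.q c := by
        by_contra hle
        exact hNe ⟨k, mem_filter.mpr ⟨hk, not_lt.mp (fun h' => hle h')⟩⟩
      simp only [mem_filter, mem_univ, true_and]
      exact ⟨(tentative_eq_some_iff M).mpr ⟨hk'.2.1, hkcnt⟩, hk'.2.2⟩
    exact le_trans h (Finset.card_le_card hsub)

/-- If `c` is over-demanded below `i`, then `c` is infeasible for `i`. -/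
lemma bad_not_feasible {app : Fin n → Option (Fin m)} {i : Fin n} {c : Fin m}
    (h : M.q c ≤ cnt app i c) : ¬ M.Feasible app i c := by
  rintro (hlt | ⟨j, hj, hij⟩)
  · have := gadget M h
    have hsub : ((univ : Finset (Fin n)).filter fun j =>
        M.tentative app j = some c ∧ j < i) ⊆ univ.filter fun j =>
        M.tentative app j = some c := by
      intro k hk; simp only [mem_filter] at hk ⊢; exact ⟨hk.1, hk.2.1⟩
    exact absurd hlt (not_lt.mpr (le_trans this (Finset.card_le_card hsub)))
  · obtain ⟨hjc, hjcnt⟩ := (tentative_eq_some_iff M).mp hj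
    have : cnt app i c ≤ cnt app j c := cnt_mono (le_of_lt hij) c
    omega

/-- If `c` is not over-demanded below `i` and `i` does not apply to `c`,
then `c` is feasible for `i`. -/
lemma not_bad_feasible {app : Fin n → Option (Fin m)} {i : Fin n} {c : Fin m}
    (h : cnt app i c < M.q c) (hne : app i ≠ some c) : M.Feasible app i c := by
  by_cases hlt : ((univ : Finset (Fin n)).filter fun j =>
      M.tentative app j = some c).card < M.q c
  · exact Or.inl hlt
  · right
    by_contra hno
    push_neg at hno
    have hsub : ((univ : Finset (Fin n)).filter fun j => M.tentative app j = some c) ⊆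
        univ.filter fun j => app j = some c ∧ j < i := by
      intro k hk
      simp only [mem_filter, mem_univ, true_and] at hk ⊢
      have hk' := (tentative_eq_some_iff M).mp hk
      have hki : k ≤ i := hno k hk
      have : k ≠ i := fun h' => hne (h' ▸ hk'.1)
      exact ⟨hk'.1, lt_of_le_of_ne hki this⟩
    have := Finset.card_le_card hsub
    unfold cnt at h
    omega


/-- Over-demand below `i` persists across a step. -/
lemma bad_mono {app app' : Fin n → Option (Fin m)} (hstep : M.Step app app')
    {i : Fin n} {c : Fin m} (h : M.q c ≤ cnt app i c) : M.q c ≤ cnt app' i c := by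
  have hg := gadget M h
  have hsub : ((univ : Finset (Fin n)).filter fun j =>
      M.tentative app j = some c ∧ j < i) ⊆
      univ.filter fun j => app' j = some c ∧ j < i := by
    intro k hk
    simp only [mem_filter, mem_univ, true_and] at hk ⊢
    obtain ⟨hkc, hkcnt⟩ := (tentative_eq_some_iff M).mp hk.1
    have hkeep : app' k = app k := (hstep k).1 (by rw [hk.1, hkc])
    exact ⟨hkeep ▸ hkc, hk.2⟩
  exact le_trans hg (Finset.card_le_card hsub)

/-- Along a run, any option strictly better than the current application is
over-demanded below `i`. -/
lemma invariant {app : ℕ → Fin n → Option (Fin m)} (hrun : M.IsRun app) :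
    ∀ t i o, M.rank i o < M.rank i (app t i) → ∃ c, o = some c ∧ M.q c ≤ cnt (app t) i c := by
  intro t
  induction t with
  | zero => intro i o ho; exact absurd ho (not_lt.mpr (hrun.1 i o))
  | succ t ih =>
    intro i o ho
    have hstep := hrun.2 t
    by_cases hkeep : M.tentative (app t) i = app t i
    · have heq : app (t + 1) i = app t i := (hstep i).1 hkeep
      obtain ⟨c, rfl, hc⟩ := ih i o (heq ▸ ho)
      exact ⟨c, rfl, bad_mono M hstep hc⟩
    · obtain ⟨hfeas, hbest⟩ := (hstep i).2 hkeep
      -- the old application is some college and over-demanded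
      obtain ⟨c0, hc0⟩ : ∃ c0, app t i = some c0 := by
        cases h' : app t i with
        | none => exact absurd (by unfold Market.tentative; simp [h', Market.Held]) hkeep
        | some c0 => exact ⟨c0, rfl⟩
      have hbad0 : M.q c0 ≤ cnt (app t) i c0 := by
        by_contra hlt
        apply hkeep
        unfold Market.tentative
        rw [if_pos]
        exact ⟨c0, hc0, not_le.mp hlt⟩
      -- o is not feasible at time t
      have hno : ¬ M.FeasibleOpt (app t) i o := fun hf =>
        absurd ho (not_lt.mpr (hbest o hf))
      obtain ⟨c, rfl⟩ : ∃ c, o = some c := by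
        cases o with
        | none => exact absurd (Or.inl rfl) hno
        | some c => exact ⟨c, rfl⟩
      refine ⟨c, rfl, bad_mono M hstep ?_⟩
      by_cases hcc : c = c0
      · exact hcc ▸ hbad0
      · by_contra hlt
        exact hno (Or.inr ⟨c, rfl, not_bad_feasible M (not_le.mp hlt)
          (fun h' => hcc (Option.some_injective _ (hc0 ▸ h' ▸ rfl)))⟩)

/-- At a fixed point every application is tentatively held. -/
lemma fixed_tentative {app : ℕ → Fin n → Option (Fin m)} (hrun : M.IsRun app)
    {t : ℕ} (hfix : app (t + 1) = app t) (i : Fin n) :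
    M.tentative (app t) i = app t i := by
  by_contra hkeep
  obtain ⟨hfeas, _⟩ := (hrun.2 t i).2 hkeep
  rw [hfix] at hfeas
  obtain ⟨c0, hc0⟩ : ∃ c0, app t i = some c0 := by
    cases h' : app t i with
    | none => exact absurd (by unfold Market.tentative; simp [h', Market.Held]) hkeep
    | some c0 => exact ⟨c0, rfl⟩
  have hbad0 : M.q c0 ≤ cnt (app t) i c0 := by
    by_contra hlt
    apply hkeep
    unfold Market.tentative
    rw [if_pos]
    exact ⟨c0, hc0, not_le.mp hlt⟩
  rcases hfeas with h' | ⟨c, hc, hfeas⟩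
  · rw [hc0] at h'; exact nomatch h'
  · rw [hc0] at hc
    obtain rfl : c0 = c := Option.some_injective _ hc
    exact bad_not_feasible M hbad0 hfeas


/-- In a stable matching, each student gets her best option among `none` and
colleges not filled by higher-priority students. -/
lemma stable_best {μ : Fin n → Option (Fin m)} (hs : M.Stable μ) (i : Fin n) :
    (μ i = none ∨ ∃ c, μ i = some c ∧ cnt μ i c < M.q c) ∧
    ∀ o, (o = none ∨ ∃ c, o = some c ∧ cnt μ i c < M.q c) →
      M.rank i (μ i) ≤ M.rank i o := by
  obtain ⟨hmatch, hIR, hno⟩ := hs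
  constructor
  · cases hμi : μ i with
    | none => exact Or.inl rfl
    | some c =>
      refine Or.inr ⟨c, rfl, ?_⟩
      have hsub : insert i ((univ : Finset (Fin n)).filter fun j => μ j = some c ∧ j < i) ⊆
          univ.filter fun j => μ j = some c := by
        intro k hk
        rcases Finset.mem_insert.mp hk with rfl | hk
        · simp [hμi]
        · simp only [mem_filter, mem_univ, true_and] at hk ⊢
          exact hk.1
      have hni : i ∉ (univ : Finset (Fin n)).filter fun j => μ j = some c ∧ j < i := by
        simp
      have := Finset.card_le_card hsub
      rw [Finset.card_insert_of_notMem hni] at this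
      have := hmatch c
      unfold cnt
      omega
  · intro o ho
    by_contra hlt
    push_neg at hlt
    rcases ho with rfl | ⟨c, rfl, hcnt⟩
    · cases hμi : μ i with
      | none => rw [hμi] at hlt; exact lt_irrefl _ hlt
      | some c =>
        have := hIR i c hμi
        rw [hμi] at hlt
        exact absurd (lt_trans this hlt) (lt_irrefl _)
    · have hne : μ i ≠ some c := fun h => by rw [h] at hlt; exact lt_irrefl _ hlt
      apply hno i c
      refine ⟨hlt, ?_⟩
      by_cases htot : ((univ : Finset (Fin n)).filter fun j => μ j = some c).card < M.q c
      · exact Or.inl htot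
      · right
        have hsub : ((univ : Finset (Fin n)).filter fun j => μ j = some c ∧ j < i) ⊆
            univ.filter fun j => μ j = some c := by
          intro k hk; simp only [mem_filter] at hk ⊢; exact ⟨hk.1, hk.2.1⟩
        have hss : ((univ : Finset (Fin n)).filter fun j => μ j = some c ∧ j < i) ⊂
            univ.filter fun j => μ j = some c := by
          refine lt_of_le_of_ne hsub ?_
          intro heq
          unfold cnt at hcnt
          rw [heq] at hcnt
          omega
        obtain ⟨j, hjT, hjS⟩ := Finset.exists_of_ssubset hss
        simp only [mem_filter, mem_univ, true_and, not_and] at hjT hjS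
        have hji : ¬ j < i := fun h => hjS hjT h
        have hjne : j ≠ i := fun h => hne (h ▸ hjT)
        exact ⟨j, hjT, lt_of_le_of_ne (not_lt.mp hji) (Ne.symm hjne)⟩

/-- Every student's application eventually stabilizes. -/
lemma settles {app : ℕ → Fin n → Option (Fin m)} (hrun : M.IsRun app) :
    ∀ i : Fin n, ∃ T, ∀ t, T ≤ t → app t i = app T i := by
  have key : ∀ N : ℕ, ∀ i : Fin n, i.val < N → ∃ T, ∀ t, T ≤ t → app t i = app T i := by
    intro N
    induction N with
    | zero => intro i h; omega
    | succ N ih =>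
      intro i hi
      by_cases hiN : i.val < N
      · exact ih i hiN
      · choose T hT using ih
        set g : Fin n → ℕ := fun j => if h : j.val < N then T j h else 0 with hg
        set T0 : ℕ := (univ : Finset (Fin n)).sup g with hT0
        have hlow : ∀ j : Fin n, j < i → ∀ t, T0 ≤ t → app t j = app T0 j := by
          intro j hji t ht
          have hjN : j.val < N := by omega
          have hgj : g j = T j hjN := by simp [hg, hjN]
          have h1 : T j hjN ≤ T0 := hgj ▸ Finset.le_sup (mem_univ j)
          rw [hT j hjN t (le_trans h1 ht), hT j hjN T0 h1]
        have hcnt : ∀ t, T0 ≤ t → ∀ c, cnt (app t) i c = cnt (app T0) i c := by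
          intro t ht c
          unfold cnt
          congr 1
          apply Finset.filter_congr
          intro j _
          by_cases hji : j < i
          · rw [hlow j hji t ht]
          · simp [hji]
        -- the application in round T0 + 1 and its key property
        set a : Option (Fin m) := app (T0 + 1) i with ha
        have hC1 : a = none ∨ ∃ c, a = some c ∧ cnt (app T0) i c < M.q c := by
          by_cases hk : M.tentative (app T0) i = app T0 i
          · have heq : a = app T0 i := (hrun.2 T0 i).1 hk
            cases hb : app T0 i with
            | none => exact Or.inl (heq.trans hb)
            | some c =>
              right
              refine ⟨c, heq.trans hb, ?_⟩
              rw [hb] at hk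
              exact ((tentative_eq_some_iff M).mp hk).2
          · obtain ⟨hfeas, _⟩ := (hrun.2 T0 i).2 hk
            rcases hfeas with h' | ⟨c, hc, hfeas⟩
            · exact Or.inl h'
            · right
              refine ⟨c, hc, ?_⟩
              by_contra hb
              exact bad_not_feasible M (not_lt.mp hb) hfeas
        have hC2 : ∀ t, T0 + 1 ≤ t → app t i = a := by
          intro t ht
          induction t, ht using Nat.le_induction with
          | base => rfl
          | succ t ht ih2 =>
            have htt : M.tentative (app t) i = app t i := by
              rcases hC1 with hnone | ⟨c, hc, hlt⟩
              · have : app t i = none := ih2.trans hnone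
                unfold Market.tentative
                rw [if_neg, this]
                rintro ⟨c', hc', _⟩
                rw [this] at hc'
                exact nomatch hc'
              · have hati : app t i = some c := ih2.trans hc
                have : cnt (app t) i c < M.q c := by
                  rw [hcnt t (by omega) c]; exact hlt
                unfold Market.tentative
                rw [if_pos ⟨c, hati, this⟩]
              
            exact ((hrun.2 t i).1 htt).trans ih2
        refine ⟨T0 + 1, fun t ht => ?_⟩
        rw [hC2 t ht, hC2 (T0 + 1) (le_refl _)]
  exact fun i => key n i i.isLt

end TCDM

/-- under straightforward strategies the TCDM terminates (some
round sees no change), and when the round limit is not binding its outcome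
equals the student-proposing deferred acceptance outcome, i.e. the unique
stable matching. -/
theorem tcdm_terminates_and_equals_DA (n m : ℕ) (M : Market n m)
    (app : ℕ → Fin n → Option (Fin m)) (hrun : M.IsRun app) :
    (∃ t, app (t + 1) = app t) ∧
      ∀ t, app (t + 1) = app t →
        ∀ μ : Fin n → Option (Fin m), M.Stable μ → M.tentative (app t) = μ := by
  classical
  constructor
  · -- termination
    choose T hT using TCDM.settles M hrun
    refine ⟨(univ : Finset (Fin n)).sup T, ?_⟩
    funext i
    have h1 : T i ≤ (univ : Finset (Fin n)).sup T := Finset.le_sup (mem_univ i)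
    rw [hT i _ (le_trans h1 (Nat.le_succ _)), hT i _ h1]
  · intro t hfix μ hμ
    have htent := TCDM.fixed_tentative M hrun hfix
    have key : ∀ N : ℕ, ∀ i : Fin n, i.val < N → app t i = μ i := by
      intro N
      induction N with
      | zero => intro i h; omega
      | succ N ih =>
        intro i hi
        by_cases hiN : i.val < N
        · exact ih i hiN
        · have hcnteq : ∀ c, TCDM.cnt (app t) i c = TCDM.cnt μ i c := by
            intro c
            unfold TCDM.cnt
            congr 1
            apply Finset.filter_congr
            intro j _
            by_cases hji : j < i
            · rw [ih j (by omega)]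
            · simp [hji]
          have hν1 : app t i = none ∨
              ∃ c, app t i = some c ∧ TCDM.cnt (app t) i c < M.q c := by
            cases hb : app t i with
            | none => exact Or.inl rfl
            | some c =>
              right
              have h' := htent i
              rw [hb] at h'
              exact ⟨c, rfl, ((TCDM.tentative_eq_some_iff M).mp h').2⟩
          have hν2 : ∀ o, (o = none ∨ ∃ c, o = some c ∧ TCDM.cnt (app t) i c < M.q c) →
              M.rank i (app t i) ≤ M.rank i o := by
            intro o ho
            by_contra hlt
            push_neg at hlt
            obtain ⟨c, rfl, hbad⟩ := TCDM.invariant M hrun t i o hlt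
            rcases ho with h' | ⟨c', hc', hlt'⟩
            · exact nomatch h'
            · obtain rfl : c = c' := Option.some_injective _ hc'
              omega
          obtain ⟨hμ1, hμ2⟩ := TCDM.stable_best M hμ i
          have h1 : M.rank i (app t i) ≤ M.rank i (μ i) := by
            apply hν2
            rcases hμ1 with h' | ⟨c, hc, hlt⟩
            · exact Or.inl h'
            · exact Or.inr ⟨c, hc, by rw [hcnteq c]; exact hlt⟩
          have h2 : M.rank i (μ i) ≤ M.rank i (app t i) := by
            apply hμ2
            rcases hν1 with h' | ⟨c, hc, hlt⟩
            · exact Or.inl h'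
            · exact Or.inr ⟨c, hc, by rw [← hcnteq c]; exact hlt⟩
          exact M.rank_inj i (le_antisymm h1 h2)
    funext i
    rw [htent i, key n i i.isLt]
end

section
/- In the common-priority college admissions model, if in the run of the time-constrained dynamic mechanism (with all students playing straightforward strategies and a binding round limit T) some student is assigned to a college she strictly prefers to her assignment under the student-proposing deferred acceptance outcome, then there exists a student with strictly higher priority who is unassigned under the TCDM outcome but assigned under the DA outcome. -/
open Finset
open scoped Classical

namespace Market

variable {n m : ℕ}

lemma tentative_eq_some' {M : Market n m} {a : Fin n → Option (Fin m)} {j : Fin n}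
    {c : Fin m} (h : M.tentative a j = some c) : M.Held a j ∧ a j = some c := by
  unfold tentative at h
  by_cases hH : M.Held a j
  · rw [if_pos hH] at h; exact ⟨hH, h⟩
  · rw [if_neg hH] at h; exact absurd h (by simp)

lemma card_tentative_le' (M : Market n m) (a : Fin n → Option (Fin m)) (c : Fin m) :
    (univ.filter fun j => M.tentative a j = some c).card ≤ M.q c := by
  classical
  set S := univ.filter fun j => M.tentative a j = some c with hS
  have happ : ∀ j ∈ S, a j = some c := by
    intro j hj
    exact (tentative_eq_some' (mem_filter.mp hj).2).2
  have hf : ∀ j ∈ S, (univ.filter fun k => a k = some c ∧ k < j).card < M.q c := by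
    intro j hj
    obtain ⟨⟨d, hd, hcnt⟩, haj⟩ := tentative_eq_some' (mem_filter.mp hj).2
    rw [haj] at hd
    cases Option.some_injective _ hd.symm
    exact hcnt
  have hmono : ∀ j₁ ∈ S, ∀ j₂, j₁ < j₂ →
      (univ.filter fun k => a k = some c ∧ k < j₁).card <
      (univ.filter fun k => a k = some c ∧ k < j₂).card := by
    intro j₁ h₁ j₂ h12
    apply Finset.card_lt_card
    constructor
    · intro k hk
      simp only [mem_filter, mem_univ, true_and] at hk ⊢
      exact ⟨hk.1, hk.2.trans h12⟩
    · intro hsub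
      have : j₁ ∈ (univ.filter fun k => a k = some c ∧ k < j₂) := by
        simp only [mem_filter, mem_univ, true_and]
        exact ⟨happ j₁ h₁, h12⟩
      have := hsub this
      simp only [mem_filter, mem_univ, true_and] at this
      exact lt_irrefl _ this.2
  have hinj : Set.InjOn (fun j => (univ.filter fun k => a k = some c ∧ k < j).card) S := by
    intro j₁ h₁ j₂ h₂ heq
    rcases lt_trichotomy j₁ j₂ with h | h | h
    · exact absurd heq (ne_of_lt (hmono j₁ h₁ j₂ h))
    · exact h
    · exact absurd heq.symm (ne_of_lt (hmono j₂ h₂ j₁ h))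
  calc S.card ≤ (Finset.range (M.q c)).card := by
        apply Finset.card_le_card_of_injOn _ (fun j hj => Finset.mem_range.mpr (hf j hj)) hinj
    _ = M.q c := Finset.card_range _

lemma exists_mem_not_mem' {A B : Finset (Fin n)} {q : ℕ} {x : Fin n}
    (hA : q ≤ A.card) (hB : B.card ≤ q) (hxB : x ∈ B) (hxA : x ∉ A) :
    ∃ k ∈ A, k ∉ B := by
  by_contra h
  push_neg at h
  have : A = B := Finset.eq_of_subset_of_card_le h (hB.trans hA)
  exact hxA (this ▸ hxB)

lemma feasible_of_stable' {M : Market n m} {μ : Fin n → Option (Fin m)} (hμ : M.Stable μ)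
    (a : Fin n → Option (Fin m)) (hinv : ∀ k, M.rank k (a k) ≤ M.rank k (μ k))
    {j : Fin n} (hrej : M.tentative a j ≠ a j) : M.FeasibleOpt a j (μ j) := by
  cases hμj : μ j with
  | none => exact Or.inl rfl
  | some c =>
    refine Or.inr ⟨c, rfl, ?_⟩
    by_contra hfeas
    unfold Feasible at hfeas
    push_neg at hfeas
    obtain ⟨hcard, hle⟩ := hfeas
    have hjH : j ∉ (univ.filter fun k => M.tentative a k = some c) := by
      intro hj
      have := (tentative_eq_some' (mem_filter.mp hj).2)
      exact hrej (by rw [(mem_filter.mp hj).2, this.2])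
    have hjD : j ∈ (univ.filter fun k => μ k = some c) := by
      simp only [mem_filter, mem_univ, true_and]; exact hμj
    obtain ⟨k, hkA, hkB⟩ := exists_mem_not_mem' hcard (hμ.1 c) hjD hjH
    simp only [mem_filter, mem_univ, true_and] at hkA hkB
    have ⟨hHk, hak⟩ := tentative_eq_some' hkA
    have hrk : M.rank k (some c) ≤ M.rank k (μ k) := by rw [← hak]; exact hinv k
    have hne : μ k ≠ some c := hkB
    have hpref : M.Prefers k (some c) (μ k) := by
      rcases lt_or_eq_of_le hrk with h | h
      · exact h
      · exact absurd (M.rank_inj k h).symm hne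
    have hkj : k < j := by
      rcases lt_or_eq_of_le (hle k hkA) with h | h
      · exact h
      · exact absurd (h ▸ hμj) hne
    exact hμ.2.2 k c ⟨hpref, Or.inr ⟨j, hμj, hkj⟩⟩

lemma inv_run' {M : Market n m} {μ : Fin n → Option (Fin m)} (hμ : M.Stable μ)
    {app : ℕ → Fin n → Option (Fin m)} (hrun : M.IsRun app) :
    ∀ t k, M.rank k (app t k) ≤ M.rank k (μ k) := by
  intro t
  induction t with
  | zero => exact fun k => hrun.1 k (μ k)
  | succ t ih =>
    intro k
    by_cases h : M.tentative (app t) k = app t k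
    · rw [(hrun.2 t k).1 h]; exact ih k
    · exact ((hrun.2 t k).2 h).2 (μ k) (feasible_of_stable' hμ (app t) ih h)

end Market

/-- if under the TCDM with binding round limit `T` some student is
assigned a college she strictly prefers to her DA assignment (DA outcome = the
unique stable matching), then some strictly higher-priority student is
unassigned under the TCDM outcome but assigned under the DA outcome. -/
theorem tcdm_gain_implies_higher_unassigned (n m : ℕ) (M : Market n m)
    (app : ℕ → Fin n → Option (Fin m)) (hrun : M.IsRun app)
    (T : ℕ) (hT : 1 ≤ T)
    (μDA : Fin n → Option (Fin m)) (hDA : M.Stable μDA)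
    (i : Fin n) (hi : M.Prefers i (M.tentative (app (T - 1)) i) (μDA i)) :
    ∃ j : Fin n, j < i ∧ M.tentative (app (T - 1)) j = none ∧ μDA j ≠ none := by
  classical
  set a := app (T - 1) with ha
  by_contra hcon
  push_neg at hcon
  have hinv : ∀ k, M.rank k (a k) ≤ M.rank k (μDA k) :=
    Market.inv_run' hDA hrun (T - 1)
  -- infinite descent: no j ≤ i strictly prefers her tentative assignment to DA
  have key : ∀ N, ∀ j : Fin n, (j : ℕ) < N → j ≤ i →
      ¬ M.Prefers j (M.tentative a j) (μDA j) := by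
    intro N
    induction N with
    | zero => intro j hj; exact absurd hj (Nat.not_lt_zero _)
    | succ N ih =>
      intro j hjN hji hP
      -- tentative a j = some c
      obtain ⟨c, hνj⟩ : ∃ c, M.tentative a j = some c := by
        cases hν : M.tentative a j with
        | some c => exact ⟨c, rfl⟩
        | none =>
          rw [hν] at hP
          cases hμj : μDA j with
          | none => rw [hμj] at hP; exact absurd hP (lt_irrefl _)
          | some d =>
            have := hDA.2.1 j d hμj
            rw [hμj] at hP
            exact absurd (hP.trans this) (lt_irrefl _)
      have hμjc : μDA j ≠ some c := by
        intro h
        rw [hνj, h] at hP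
        exact lt_irrefl _ hP
      -- not blocking: c is full under μDA with all occupants < j
      have hnb := hDA.2.2 j c
      unfold Market.Blocks at hnb
      push_neg at hnb
      have hPc : M.Prefers j (some c) (μDA j) := by rw [← hνj]; exact hP
      obtain ⟨hcard, hocc⟩ := hnb hPc
      -- counting: one seat of c under the tentative matching is taken by j
      have hjH : j ∈ (univ.filter fun k => M.tentative a k = some c) := by
        simp only [mem_filter, mem_univ, true_and]; exact hνj
      have hjD : j ∉ (univ.filter fun k => μDA k = some c) := by
        simp only [mem_filter, mem_univ, true_and]; exact hμjc
      obtain ⟨k, hkA, hkB⟩ := Market.exists_mem_not_mem' hcard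
        (Market.card_tentative_le' M a c) hjH hjD
      simp only [mem_filter, mem_univ, true_and] at hkA hkB
      -- k < j
      have hkj : k < j := by
        rcases lt_or_eq_of_le (hocc k hkA) with h | h
        · exact h
        · exact absurd (h ▸ hkA) hμjc
      have hki : k < i := lt_of_lt_of_le hkj hji
      -- k is not unassigned under the tentative matching
      have hνk : M.tentative a k ≠ none := by
        intro h
        rw [hcon k hki h] at hkA
        exact absurd hkA (by simp)
      obtain ⟨d, hνkd⟩ : ∃ d, M.tentative a k = some d := by
        cases h : M.tentative a k with
        | none => exact absurd h hνk
        | some d => exact ⟨d, rfl⟩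
      have hak : a k = some d := (Market.tentative_eq_some' hνkd).2
      have hrk : M.rank k (M.tentative a k) ≤ M.rank k (μDA k) := by
        rw [hνkd, ← hak]; exact hinv k
      have hPk : M.Prefers k (M.tentative a k) (μDA k) := by
        rcases lt_or_eq_of_le hrk with h | h
        · exact h
        · exact absurd ((M.rank_inj k h).trans hkA) hkB
      have hkN : (k : ℕ) < N := lt_of_lt_of_le hkj (Nat.lt_succ_iff.mp hjN)
      exact ih k hkN (le_of_lt hki) hPk
  exact key n i i.isLt le_rfl hi
end

section
/- In the common-priority college admissions model, if a student is assigned to her most preferred college under the DA outcome, then she is also assigned to her most preferred college under the TCDM outcome with straightforward strategies, for any round limit T ≥ 1. -/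
open Finset
open scoped Classical

/-- If some student `w` of lower priority than `j` is assigned `d` in a stable
matching, and `j` weakly prefers `d` to her own assignment, then `j` is assigned
`d`. -/
private lemma assign_eq {n m : ℕ} (M : Market n m) (μDA : Fin n → Option (Fin m))
    (hDA : M.Stable μDA) {j w : Fin n} {d : Fin m}
    (hw : μDA w = some d) (hjw : j < w)
    (hle : M.rank j (some d) ≤ M.rank j (μDA j)) : μDA j = some d := by
  by_contra hne
  have hlt : M.rank j (some d) < M.rank j (μDA j) :=
    lt_of_le_of_ne hle (fun h => hne (M.rank_inj j h).symm)
  exact hDA.2.2 j d ⟨hlt, Or.inr ⟨w, hw, hjw⟩⟩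

/-- Invariant: no student ever applies to an option strictly worse than her DA
assignment. -/
private lemma tcdm_inv {n m : ℕ} (M : Market n m) (app : ℕ → Fin n → Option (Fin m))
    (hrun : M.IsRun app) (μDA : Fin n → Option (Fin m)) (hDA : M.Stable μDA) :
    ∀ t j, M.rank j (app t j) ≤ M.rank j (μDA j) := by
  intro t
  induction t with
  | zero => intro j; exact hrun.1 j (μDA j)
  | succ t ih =>
    intro j
    by_cases heq : M.tentative (app t) j = app t j
    · rw [(hrun.2 t j).1 heq]; exact ih j
    · obtain ⟨_, hmin⟩ := (hrun.2 t j).2 heq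
      refine hmin (μDA j) ?_
      rcases hμ : μDA j with _ | d
      · exact Or.inl rfl
      · refine Or.inr ⟨d, rfl, ?_⟩
        by_contra hnf
        unfold Market.Feasible at hnf
        push_neg at hnf
        obtain ⟨hfull, hmax⟩ := hnf
        have htj : M.tentative (app t) j = none := by
          unfold Market.tentative at heq ⊢
          split_ifs at heq ⊢ with h
          · exact absurd rfl heq
          · rfl
        have hsub : (univ.filter fun j' => M.tentative (app t) j' = some d) ⊆
            univ.filter fun j' => μDA j' = some d := by
          intro j' hj'
          simp only [mem_filter, mem_univ, true_and] at hj' ⊢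
          have happ : app t j' = some d := by
            unfold Market.tentative at hj'
            split_ifs at hj'
            exact hj'
          have hlt : j' < j := lt_of_le_of_ne (hmax j' hj') (fun h => by
            rw [h, htj] at hj'; exact nomatch hj')
          exact assign_eq M μDA hDA hμ hlt (by rw [← happ]; exact ih j')
        have hss : (univ.filter fun j' => M.tentative (app t) j' = some d) ⊂
            univ.filter fun j' => μDA j' = some d := by
          refine ⟨hsub, fun hcon => ?_⟩
          have := hcon (mem_filter.mpr ⟨mem_univ j, hμ⟩)
          simp only [mem_filter, htj] at this
          exact nomatch this.2
        exact absurd (lt_of_lt_of_le (card_lt_card hss) (hDA.1 d)) (not_lt.mpr hfull)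

/-- a student assigned to her most preferred college under DA (the
unique stable matching) is also assigned to it under the TCDM with
straightforward strategies, for any round limit `T ≥ 1`. -/
theorem tcdm_preserves_DA_first_choice (n m : ℕ) (M : Market n m)
    (app : ℕ → Fin n → Option (Fin m)) (hrun : M.IsRun app)
    (μDA : Fin n → Option (Fin m)) (hDA : M.Stable μDA)
    (i : Fin n) (c : Fin m) (hc : μDA i = some c)
    (htop : ∀ c' : Fin m, M.rank i (some c) ≤ M.rank i (some c')) :
    ∀ T : ℕ, 1 ≤ T → M.tentative (app (T - 1)) i = some c := by
  have h0 : app 0 i = some c := by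
    have h1 := hrun.1 i (some c)
    have h2 : M.rank i (some c) ≤ M.rank i (app 0 i) := by
      rcases h : app 0 i with _ | c'
      · exact le_of_lt (hDA.2.1 i c hc)
      · exact htop c'
    exact M.rank_inj i (le_antisymm h1 h2)
  have hheld : ∀ t, app t i = some c → M.Held (app t) i := by
    intro t ht
    refine ⟨c, ht, ?_⟩
    have hsub : (univ.filter fun j => app t j = some c ∧ j < i) ⊆
        univ.filter fun j => μDA j = some c := by
      intro j hj
      simp only [mem_filter, mem_univ, true_and] at hj ⊢
      exact assign_eq M μDA hDA hc hj.2
        (by rw [← hj.1]; exact tcdm_inv M app hrun μDA hDA t j)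
    have hss : (univ.filter fun j => app t j = some c ∧ j < i) ⊂
        univ.filter fun j => μDA j = some c := by
      refine ⟨hsub, fun hcon => ?_⟩
      have := hcon (mem_filter.mpr ⟨mem_univ i, hc⟩)
      simp only [mem_filter] at this
      exact lt_irrefl i this.2.2
    exact lt_of_lt_of_le (card_lt_card hss) (hDA.1 c)
  have hall : ∀ t, app t i = some c := by
    intro t
    induction t with
    | zero => exact h0
    | succ t ih =>
      have hten : M.tentative (app t) i = app t i := by
        unfold Market.tentative; rw [if_pos (hheld t ih)]
      rw [(hrun.2 t i).1 hten, ih]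
  intro T _
  have hten : M.tentative (app (T - 1)) i = app (T - 1) i := by
    unfold Market.tentative; rw [if_pos (hheld _ (hall _))]
  rw [hten, hall]
end

section
/- There exists a common-priority college admissions market with 4 students and 4 unit-capacity colleges such that under the TCDM with round limit T = 2 and straightforward strategies, the lowest-priority student is assigned to a college she strictly prefers to her deferred-acceptance assignment. -/
open Finset
open scoped Classical

namespace TCexample

/-- Preferences: students 0 and 1 rank `a > b > c > d`; students 2 and 3 rank
`b > c > d > a`. -/
def P : Fin 4 → Equiv.Perm (Fin 4) := ![1, 1, Equiv.addRight 3, Equiv.addRight 3]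

noncomputable def M : Market 4 4 := mkMarket (fun _ => 1) P

def app : ℕ → Fin 4 → Option (Fin 4)
  | 0 => ![some 0, some 0, some 1, some 1]
  | 1 => ![some 0, some 1, some 1, some 2]
  | 2 => ![some 0, some 1, some 2, some 2]
  | _ + 3 => ![some 0, some 1, some 2, some 3]

def μDA : Fin 4 → Option (Fin 4) := ![some 0, some 1, some 2, some 3]

lemma card_lt_one_iff {α : Type*} [Fintype α] (p : α → Prop) [DecidablePred p] :
    (univ.filter p).card < 1 ↔ ∀ x, ¬ p x := by
  simp [Nat.lt_one_iff, Finset.card_eq_zero, Finset.filter_eq_empty_iff]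

lemma held_iff (a : Fin 4 → Option (Fin 4)) (i : Fin 4) :
    M.Held a i ↔ ∃ c, a i = some c ∧ ∀ j, ¬ (a j = some c ∧ j < i) := by
  simp only [Market.Held, show ∀ c : Fin 4, M.q c = 1 from fun _ => rfl,
    card_lt_one_iff]

lemma tentative_eq (a f : Fin 4 → Option (Fin 4))
    (h : ∀ i, (f i = a i ∧ ∃ c, a i = some c ∧ ∀ j, ¬ (a j = some c ∧ j < i)) ∨
              (f i = none ∧ ∀ c, a i = some c → ∃ j, a j = some c ∧ j < i)) :
    M.tentative a = f := by
  funext i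
  rcases h i with ⟨hf, hH⟩ | ⟨hf, hH⟩
  · rw [Market.tentative, if_pos ((held_iff a i).2 hH), ← hf]
  · rw [Market.tentative, if_neg, hf]
    rw [held_iff]
    rintro ⟨c, hc, hall⟩
    obtain ⟨j, hj⟩ := hH c hc
    exact hall j hj

lemma t0 : M.tentative (app 0) = ![some 0, none, some 1, none] :=
  tentative_eq _ _ (by decide)

lemma t1 : M.tentative (app 1) = ![some 0, some 1, none, some 2] :=
  tentative_eq _ _ (by decide)

lemma t2 : M.tentative (app 2) = ![some 0, some 1, some 2, none] :=
  tentative_eq _ _ (by decide)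

lemma app3 (k : ℕ) : app (k + 3) = ![some 0, some 1, some 2, some 3] := rfl

lemma t3 (k : ℕ) : M.tentative (app (k + 3)) = app (k + 3) := by
  rw [app3]
  exact tentative_eq _ _ (by decide)

lemma feasibleOpt_iff (a g : Fin 4 → Option (Fin 4)) (hg : M.tentative a = g)
    (i : Fin 4) (o : Option (Fin 4)) :
    M.FeasibleOpt a i o ↔
      o = none ∨ ∃ c, o = some c ∧
        ((∀ j, ¬ g j = some c) ∨ ∃ j, g j = some c ∧ i < j) := by
  simp only [Market.FeasibleOpt, Market.Feasible, hg,
    show ∀ c : Fin 4, M.q c = 1 from fun _ => rfl, card_lt_one_iff]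

/-- One straightforward-revision step, with tentative matching precomputed. -/
lemma step_of (a a' g : Fin 4 → Option (Fin 4)) (hg : M.tentative a = g)
    (h : ∀ i : Fin 4,
      (g i = a i → a' i = a i) ∧
      (g i ≠ a i →
        (a' i = none ∨ ∃ c, a' i = some c ∧
          ((∀ j, ¬ g j = some c) ∨ ∃ j, g j = some c ∧ i < j)) ∧
        ∀ o, (o = none ∨ ∃ c, o = some c ∧
            ((∀ j, ¬ g j = some c) ∨ ∃ j, g j = some c ∧ i < j)) →
          M.rank i (a' i) ≤ M.rank i o)) :
    M.Step a a' := by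
  intro i
  rw [hg]
  refine ⟨(h i).1, fun hne => ?_⟩
  obtain ⟨h1, h2⟩ := (h i).2 hne
  refine ⟨(feasibleOpt_iff a g hg i _).2 h1, fun o ho => ?_⟩
  exact h2 o ((feasibleOpt_iff a g hg i o).1 ho)

lemma step0 : M.Step (app 0) (app 1) := step_of _ _ _ t0 (by decide)
lemma step1 : M.Step (app 1) (app 2) := step_of _ _ _ t1 (by decide)
lemma step2 : M.Step (app 2) (app 3) := step_of _ _ _ t2 (by decide)
lemma step3 (k : ℕ) : M.Step (app (k + 3)) (app (k + 4)) := by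
  have h4 : app (k + 4) = ![some 0, some 1, some 2, some 3] := rfl
  rw [app3, h4]
  exact step_of _ _ ![some 0, some 1, some 2, some 3] (tentative_eq _ _ (by decide)) (by decide)

lemma isRun : M.IsRun app := by
  refine ⟨by decide, fun t => ?_⟩
  match t with
  | 0 => exact step0
  | 1 => exact step1
  | 2 => exact step2
  | k + 3 => exact step3 k

lemma stableDA : M.Stable μDA := by
  have key1 : ∀ c a b : Fin 4, μDA a = some c → μDA b = some c → a = b := by decide
  have key2 : ∀ i c : Fin 4, μDA i = some c → M.rank i (some c) < M.rank i none := by decide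
  have key3 : ∀ i c : Fin 4, ¬ (M.rank i (some c) < M.rank i (μDA i) ∧
      ((∀ x, ¬ μDA x = some c) ∨ ∃ j, μDA j = some c ∧ i < j)) := by decide
  refine ⟨?_, key2, ?_⟩
  · intro c
    show _ ≤ 1
    rw [Finset.card_le_one]
    simp only [Finset.mem_filter, Finset.mem_univ, true_and]
    exact fun a ha b hb => key1 c a b ha hb
  · rintro i c ⟨hpref, hor⟩
    refine key3 i c ⟨hpref, ?_⟩
    rcases hor with hfree | hlow
    · rw [show M.q c = 1 from rfl, card_lt_one_iff] at hfree
      exact Or.inl hfree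
    · exact Or.inr hlow

end TCexample

/-- indirect time-constraint effect: there is a market with 4
students and 4 unit-capacity colleges where, under the TCDM with `T = 2` and
straightforward strategies, the lowest-priority student is assigned a college
she strictly prefers to her deferred-acceptance assignment (the unique stable
matching). -/
theorem exists_indirect_time_constraint_effect :
    ∃ M : Market 4 4, (∀ c, M.q c = 1) ∧
      ∃ (app : ℕ → Fin 4 → Option (Fin 4)) (μDA : Fin 4 → Option (Fin 4)),
        M.IsRun app ∧ M.Stable μDA ∧
        M.Prefers (⟨3, by norm_num⟩ : Fin 4)
          (M.tentative (app 1) ⟨3, by norm_num⟩) (μDA ⟨3, by norm_num⟩) := by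
  refine ⟨TCexample.M, fun _ => rfl, TCexample.app, TCexample.μDA,
    TCexample.isRun, TCexample.stableDA, ?_⟩
  rw [TCexample.t1]
  show TCexample.M.rank _ (some 2) < TCexample.M.rank _ (some 3)
  decide
end

section
/- The matching produced by the TCDM with a binding round limit under straightforward strategies need not be stable: there exists a market and T such that the TCDM outcome has a blocking pair. -/
open Finset
open scoped Classical

noncomputable def Mex : Market 2 2 := mkMarket (fun _ => 1) (fun _ => Equiv.refl _)

def appEx : ℕ → Fin 2 → Option (Fin 2) := fun t i => if t = 0 then some 0 else some i

lemma Mex_q (c : Fin 2) : Mex.q c = 1 := rfl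

lemma Mex_rank_some (i c : Fin 2) : Mex.rank i (some c) = (c : ℕ) := rfl

lemma Mex_rank_none (i : Fin 2) : Mex.rank i none = 2 := rfl

lemma held0 (a : Fin 2 → Option (Fin 2)) (c : Fin 2) (h : a 0 = some c) :
    Mex.Held a 0 := by
  refine ⟨c, h, ?_⟩
  have : (univ.filter fun j => a j = some c ∧ j < (0 : Fin 2)) = ∅ := by
    ext j
    simp only [Finset.mem_filter, Finset.mem_univ, true_and, Finset.notMem_empty, iff_false]
    rintro ⟨-, hj⟩
    exact absurd hj (by omega)
  rw [this]
  simp [Mex_q]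

lemma not_held1 : ¬ Mex.Held (appEx 0) 1 := by
  rintro ⟨c, hc, hcard⟩
  have hc0 : c = 0 := by
    have : (some 0 : Option (Fin 2)) = some c := hc
    exact (Option.some_injective _ this).symm
  subst hc0
  have h0 : (0 : Fin 2) ∈ univ.filter fun j => appEx 0 j = some 0 ∧ j < (1 : Fin 2) := by
    simp [appEx]
  have := Finset.card_pos.mpr ⟨0, h0⟩
  rw [Mex_q] at hcard
  omega

lemma tent0_0 : Mex.tentative (appEx 0) 0 = some 0 := by
  rw [Market.tentative, if_pos (held0 (appEx 0) 0 rfl)]; rfl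

lemma tent0_1 : Mex.tentative (appEx 0) 1 = none := by
  rw [Market.tentative, if_neg not_held1]

lemma tent0_eq (i : Fin 2) :
    Mex.tentative (appEx 0) i = if i = 0 then some 0 else none := by
  fin_cases i
  · simpa using tent0_0
  · simpa using tent0_1

lemma card_tent0 (c : Fin 2) :
    (univ.filter fun j => Mex.tentative (appEx 0) j = some c).card
      = if c = 0 then 1 else 0 := by
  fin_cases c
  · have : (univ.filter fun j => Mex.tentative (appEx 0) j = some 0) = {0} := by
      ext j
      fin_cases j <;> simp [tent0_0, tent0_1]
    simp [this]
  · have : (univ.filter fun j => Mex.tentative (appEx 0) j = some 1) = ∅ := by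
      ext j
      fin_cases j <;> simp [tent0_0, tent0_1]
    simp [this]

lemma tent_later (t : ℕ) (ht : t ≠ 0) (i : Fin 2) :
    Mex.tentative (appEx t) i = appEx t i := by
  have happ : ∀ j : Fin 2, appEx t j = some j := fun j => by simp [appEx, ht]
  rw [Market.tentative, if_pos]
  refine ⟨i, happ i, ?_⟩
  have : (univ.filter fun j => appEx t j = some i ∧ j < i) = ∅ := by
    ext j
    simp only [Finset.mem_filter, Finset.mem_univ, true_and, Finset.notMem_empty, iff_false]
    rintro ⟨hji, hj⟩
    rw [happ j] at hji
    exact absurd (Option.some_injective _ hji) (ne_of_lt hj)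
  rw [this]
  simp [Mex_q]

/-- the TCDM outcome with a binding round limit under
straightforward strategies need not be stable: some market and `T` yield an
outcome with a blocking pair. -/
theorem tcdm_not_always_stable :
    ∃ (n m : ℕ) (M : Market n m) (T : ℕ) (app : ℕ → Fin n → Option (Fin m)),
      1 ≤ T ∧ M.IsRun app ∧
      ∃ (i : Fin n) (c : Fin m), M.Blocks (M.tentative (app (T - 1))) i c := by
  refine ⟨2, 2, Mex, 1, appEx, le_refl 1, ⟨?_, ?_⟩, 1, 1, ?_, ?_⟩
  · -- round-1: everyone applies to her most preferred option (college 0)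
    intro i o
    have h0 : appEx 0 i = some 0 := rfl
    rw [h0, Mex_rank_some]
    exact Nat.zero_le _
  · -- each step is a straightforward revision
    intro t i
    rcases Nat.eq_zero_or_pos t with rfl | ht
    · obtain rfl | rfl : i = 0 ∨ i = 1 := by fin_cases i <;> [left; right] <;> rfl
      · constructor
        · intro _; rfl
        · intro h; exact absurd (by rw [tent0_0]; rfl) h
      · constructor
        · intro h; rw [tent0_1] at h; exact absurd h.symm (by simp [appEx])
        · intro _
          have happ1 : appEx 1 1 = some 1 := rfl
          constructor
          · refine Or.inr ⟨1, happ1, Or.inl ?_⟩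
            rw [card_tent0, Mex_q]; simp
          · intro o ho
            rw [happ1, Mex_rank_some]
            rcases ho with rfl | ⟨c, rfl, hc⟩
            · rw [Mex_rank_none]; omega
            · rw [Mex_rank_some]
              fin_cases c
              · exfalso
                rcases hc with hcard | ⟨j, hj, hlt⟩
                · rw [card_tent0, Mex_q] at hcard; simp at hcard
                · have : (j : ℕ) < 2 := j.isLt
                  have h1j : (1 : ℕ) < (j : ℕ) := hlt
                  omega
              · simp
    · have ht' : t ≠ 0 := by omega
      constructor
      · intro _
        show appEx (t + 1) i = appEx t i
        simp [appEx, ht']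
      · intro h
        exact absurd (tent_later t ht' i) h
  · -- student 1 prefers college 1 to her assignment (none)
    show Mex.rank 1 (some 1) < Mex.rank 1 (Mex.tentative (appEx 0) 1)
    rw [tent0_1, Mex_rank_some, Mex_rank_none]
    omega
  · -- college 1 has a free seat
    left
    rw [card_tent0, Mex_q]
    simp
end

section
/- The matching produced by the TCDM with a binding round limit under straightforward strategies need not be Pareto efficient for students: there exists a market and T such that another matching makes every student weakly better off and some student strictly better off than the TCDM outcome. -/
open Finset
open scoped Classical

noncomputable def M₀ : Market 2 2 := mkMarket (fun _ => 1) (fun _ => Equiv.refl (Fin 2))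

def app₀ : ℕ → Fin 2 → Option (Fin 2) := fun t i =>
  if t = 0 then some 0 else if i = 0 then some 0 else some 1

lemma M₀_rank_some (i c : Fin 2) : M₀.rank i (some c) = (c : ℕ) := rfl

lemma M₀_rank_none (i : Fin 2) : M₀.rank i none = 2 := rfl

lemma fin2_cases (i : Fin 2) : i = 0 ∨ i = 1 := by omega

lemma fin2_not_lt_zero (j : Fin 2) : ¬ j < 0 := by
  rcases fin2_cases j with rfl | rfl <;> decide

lemma fin2_not_one_lt (j : Fin 2) : ¬ (1 : Fin 2) < j := by
  rcases fin2_cases j with rfl | rfl <;> decide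

lemma card_lt_one (p : Fin 2 → Prop) [DecidablePred p] (hp : ∀ j, ¬ p j) :
    (univ.filter p).card < 1 := by
  rw [Finset.card_eq_zero.mpr (Finset.filter_eq_empty_iff.mpr fun j _ => hp j)]
  omega

lemma one_le_card_aux (p : Fin 2 → Prop) [DecidablePred p] (j : Fin 2) (hj : p j) :
    1 ≤ (univ.filter p).card :=
  Finset.card_pos.mpr ⟨j, Finset.mem_filter.mpr ⟨Finset.mem_univ j, hj⟩⟩

lemma held0_0 : M₀.Held (app₀ 0) 0 :=
  ⟨0, rfl, card_lt_one _ fun j ⟨_, hj⟩ => fin2_not_lt_zero j hj⟩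

lemma tent0_0_s12 : M₀.tentative (app₀ 0) 0 = some 0 := by
  rw [Market.tentative, if_pos held0_0]; rfl

lemma not_held0_1 : ¬ M₀.Held (app₀ 0) 1 := by
  rintro ⟨c, hc, hcard⟩
  have hc0 : c = 0 := by
    have : some c = some 0 := by rw [← hc]; rfl
    exact Option.some_injective _ this
  subst hc0
  have h1 : 1 ≤ (univ.filter fun j => app₀ 0 j = some 0 ∧ j < (1 : Fin 2)).card :=
    one_le_card_aux _ 0 ⟨rfl, by decide⟩
  have hq : M₀.q 0 = 1 := rfl
  omega

lemma tent0_1_s12 : M₀.tentative (app₀ 0) 1 = none := by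
  rw [Market.tentative, if_neg not_held0_1]

lemma tent0 (i : Fin 2) :
    M₀.tentative (app₀ 0) i = if i = 0 then some 0 else none := by
  rcases fin2_cases i with rfl | rfl
  · rw [tent0_0_s12]; rfl
  · rw [tent0_1_s12]; rfl

lemma app_pos (t : ℕ) (ht : t ≠ 0) (j : Fin 2) :
    app₀ t j = if j = 0 then some 0 else some 1 := by
  simp [app₀, ht]

lemma tent1 (t : ℕ) (ht : t ≠ 0) (i : Fin 2) :
    M₀.tentative (app₀ t) i = app₀ t i := by
  rcases fin2_cases i with rfl | rfl
  · have h : M₀.Held (app₀ t) 0 :=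
      ⟨0, by rw [app_pos t ht]; rfl, card_lt_one _ fun j ⟨_, hj⟩ => fin2_not_lt_zero j hj⟩
    rw [Market.tentative, if_pos h]
  · have h : M₀.Held (app₀ t) 1 := by
      refine ⟨1, by rw [app_pos t ht]; rfl, card_lt_one _ ?_⟩
      rintro j ⟨hj1, hj2⟩
      have hj0 : j = 0 := by
        rcases fin2_cases j with rfl | rfl
        · rfl
        · exact absurd hj2 (lt_irrefl _)
      subst hj0
      rw [app_pos t ht] at hj1
      simp at hj1
    rw [Market.tentative, if_pos h]

lemma not_feasible_c0 : ¬ M₀.Feasible (app₀ 0) 1 0 := by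
  rintro (h | ⟨j, hj1, hj2⟩)
  · have h1 : 1 ≤ (univ.filter fun j => M₀.tentative (app₀ 0) j = some 0).card :=
      one_le_card_aux _ 0 tent0_0_s12
    have hq : M₀.q 0 = 1 := rfl
    omega
  · exact fin2_not_one_lt j hj2

lemma feasible_c1 : M₀.Feasible (app₀ 0) 1 1 := by
  left
  show _ < 1
  refine card_lt_one _ fun j hj => ?_
  rw [tent0 j] at hj
  rcases fin2_cases j with rfl | rfl <;> simp at hj

/-- the TCDM outcome with a binding round limit under
straightforward strategies need not be Pareto efficient: in some market another
matching makes every student weakly better off and some student strictly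
better off. -/
theorem tcdm_not_always_pareto_efficient :
    ∃ (n m : ℕ) (M : Market n m) (T : ℕ) (app : ℕ → Fin n → Option (Fin m)),
      1 ≤ T ∧ M.IsRun app ∧
      ∃ ν : Fin n → Option (Fin m), M.IsMatching ν ∧
        (∀ i, M.rank i (ν i) ≤ M.rank i (M.tentative (app (T - 1)) i)) ∧
        ∃ i, M.rank i (ν i) < M.rank i (M.tentative (app (T - 1)) i) := by
  classical
  refine ⟨2, 2, M₀, 1, app₀, le_refl 1, ⟨?_, ?_⟩, app₀ 1, ?_, ?_, 1, ?_⟩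
  · -- first round: everyone applies to top choice
    intro i o
    have h : app₀ 0 i = some 0 := rfl
    rw [h, M₀_rank_some]
    exact Nat.zero_le _
  · -- Step at each round
    intro t
    rcases Nat.eq_zero_or_pos t with rfl | ht
    · intro i
      rcases fin2_cases i with rfl | rfl
      · constructor
        · intro _; rfl
        · intro h; exact absurd tent0_0_s12 h
      · constructor
        · intro h
          rw [tent0_1_s12] at h
          exact absurd h.symm (by simp [app₀])
        · intro _
          have h1 : app₀ (0 + 1) 1 = some 1 := rfl
          constructor
          · rw [h1]; exact Or.inr ⟨1, rfl, feasible_c1⟩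
          · intro o ho
            rw [h1, M₀_rank_some]
            rcases ho with rfl | ⟨c, rfl, hc⟩
            · rw [M₀_rank_none]; omega
            · rcases fin2_cases c with rfl | rfl
              · exact absurd hc not_feasible_c0
              · rw [M₀_rank_some]
    · intro i
      have ht' : t ≠ 0 := by omega
      constructor
      · intro _
        rw [app_pos (t + 1) (by omega), app_pos t ht']
      · intro h
        exact absurd (tent1 t ht' i) h
  · -- IsMatching (app₀ 1)
    intro c
    have hq : M₀.q c = 1 := rfl
    rw [hq]
    apply Finset.card_le_one.mpr
    intro a ha b hb
    rw [Finset.mem_filter] at ha hb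
    rcases fin2_cases c with rfl | rfl <;>
        rcases fin2_cases a with rfl | rfl <;> rcases fin2_cases b with rfl | rfl <;>
      first
        | rfl
        | exact absurd ha.2 (by decide)
        | exact absurd hb.2 (by decide)
  · -- weak improvement
    intro i
    rcases fin2_cases i with rfl | rfl
    · rw [tent0_0_s12]
      have h0 : app₀ 1 0 = some 0 := rfl
      rw [h0]
    · rw [tent0_1_s12]
      have h1 : app₀ 1 1 = some 1 := rfl
      rw [h1, M₀_rank_some, M₀_rank_none]
      omega
  · -- strict improvement for student 1
    rw [tent0_1_s12]
    have h1 : app₀ 1 1 = some 1 := rfl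
    rw [h1, M₀_rank_some, M₀_rank_none]
    omega
end

section
/- For i.i.d. uniformly random strict student preferences in the common-priority model, every student's probability of being matched to her first-choice college under the TCDM with straightforward strategies and round limit T is at least her probability of being matched to her first choice under deferred acceptance. -/
open Finset
open scoped Classical

noncomputable def availSet {n m : ℕ} (M : Market n m) (f : Fin n → Option (Fin m))
    (i : Fin n) : Finset (Option (Fin m)) :=
  Finset.univ.filter fun o => o = none ∨ ∃ c, o = some c ∧
    (Finset.univ.filter fun j => j < i ∧ f j = some c).card < M.q c

lemma none_mem_availSet {n m : ℕ} (M : Market n m) (f : Fin n → Option (Fin m)) (i : Fin n) :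
    none ∈ availSet M f i :=
  Finset.mem_filter.mpr ⟨Finset.mem_univ _, Or.inl rfl⟩

noncomputable def pick {n m : ℕ} (M : Market n m) (f : Fin n → Option (Fin m))
    (i : Fin n) : Option (Fin m) :=
  (Finset.exists_min_image (availSet M f i) (M.rank i) ⟨none, none_mem_availSet M f i⟩).choose

lemma pick_spec {n m : ℕ} (M : Market n m) (f : Fin n → Option (Fin m)) (i : Fin n) :
    pick M f i ∈ availSet M f i ∧ ∀ o ∈ availSet M f i, M.rank i (pick M f i) ≤ M.rank i o := by
  have h := (Finset.exists_min_image (availSet M f i) (M.rank i)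
      ⟨none, none_mem_availSet M f i⟩).choose_spec
  exact ⟨h.1, h.2⟩

noncomputable def sdAux {n m : ℕ} (M : Market n m) : ℕ → Fin n → Option (Fin m)
  | 0 => fun _ => none
  | k + 1 => fun i => if i.val = k then pick M (sdAux M k) i else sdAux M k i

noncomputable def sd {n m : ℕ} (M : Market n m) (i : Fin n) : Option (Fin m) :=
  sdAux M (i.val + 1) i

lemma sdAux_eq_sd {n m : ℕ} (M : Market n m) (k : ℕ) (j : Fin n) (h : j.val < k) :
    sdAux M k j = sd M j := by
  induction k with
  | zero => omega
  | succ k ih =>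
    rcases Nat.lt_succ_iff_lt_or_eq.mp h with h' | h'
    · have hne : j.val ≠ k := Nat.ne_of_lt h'
      simp only [sdAux, hne, if_false]
      exact ih h'
    · subst h'; rfl

lemma availSet_sdAux {n m : ℕ} (M : Market n m) (i : Fin n) :
    availSet M (sdAux M i.val) i = availSet M (sd M) i := by
  unfold availSet
  apply Finset.filter_congr
  intro o _
  have hfe : ∀ c, (Finset.univ.filter fun j => j < i ∧ sdAux M i.val j = some c)
      = (Finset.univ.filter fun j => j < i ∧ sd M j = some c) := by
    intro c
    apply Finset.filter_congr
    intro j _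
    have : j < i → sdAux M i.val j = sd M j := fun hj => sdAux_eq_sd M _ j hj
    constructor
    · rintro ⟨hj, he⟩; exact ⟨hj, (this hj) ▸ he⟩
    · rintro ⟨hj, he⟩; exact ⟨hj, (this hj).symm ▸ he⟩
  simp only [hfe]

lemma sd_spec {n m : ℕ} (M : Market n m) (i : Fin n) :
    sd M i ∈ availSet M (sd M) i ∧
      ∀ o ∈ availSet M (sd M) i, M.rank i (sd M i) ≤ M.rank i o := by
  have : sd M i = pick M (sdAux M i.val) i := by
    simp [sd, sdAux]
  rw [this, ← availSet_sdAux]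
  exact pick_spec M (sdAux M i.val) i

-- definitions copied from the problem file for scratch purposes

lemma sd_mem {n m : ℕ} (M : Market n m) (i : Fin n) :
    sd M i = none ∨ ∃ c, sd M i = some c ∧
      (Finset.univ.filter fun j => j < i ∧ sd M j = some c).card < M.q c := by
  have h := (sd_spec M i).1
  simpa [availSet] using h

lemma sd_min {n m : ℕ} (M : Market n m) (i : Fin n) (o : Option (Fin m))
    (ho : o = none ∨ ∃ c, o = some c ∧
      (Finset.univ.filter fun j => j < i ∧ sd M j = some c).card < M.q c) :
    M.rank i (sd M i) ≤ M.rank i o := by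
  exact (sd_spec M i).2 o (by simpa [availSet] using ho)

theorem sd_stable {n m : ℕ} (M : Market n m) : M.Stable (sd M) := by
  refine ⟨?_, ?_, ?_⟩
  · -- IsMatching
    intro c
    by_contra hlt
    push_neg at hlt
    set S := Finset.univ.filter fun j => sd M j = some c with hS
    have hne : S.Nonempty := Finset.card_pos.mp (by omega)
    set i := S.max' hne with hi
    have hiS : i ∈ S := S.max'_mem hne
    have hisome : sd M i = some c := (Finset.mem_filter.mp hiS).2
    rcases sd_mem M i with h | ⟨c', hc', hcard⟩
    · rw [hisome] at h; exact Option.some_ne_none _ h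
    · rw [hisome] at hc'
      have hcc : c = c' := Option.some_injective _ hc'
      cases hcc
      have hsub : S.erase i ⊆ Finset.univ.filter fun j => j < i ∧ sd M j = some c := by
        intro j hj
        rw [Finset.mem_erase] at hj
        refine Finset.mem_filter.mpr ⟨Finset.mem_univ _, ?_, (Finset.mem_filter.mp hj.2).2⟩
        exact lt_of_le_of_ne (S.le_max' j hj.2) hj.1
      have := Finset.card_le_card hsub
      rw [Finset.card_erase_of_mem hiS] at this
      omega
  · -- IR
    intro i c hic
    have h := sd_min M i none (Or.inl rfl)
    rw [hic] at h
    exact lt_of_le_of_ne h (fun he => Option.some_ne_none _ (M.rank_inj i he))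
  · -- no blocks
    intro i c hb
    obtain ⟨hpref, hor⟩ := hb
    have hav : (Finset.univ.filter fun j => j < i ∧ sd M j = some c).card < M.q c := by
      rcases hor with h | ⟨j, hj, hij⟩
      · refine lt_of_le_of_lt (Finset.card_le_card ?_) h
        intro k hk
        exact Finset.mem_filter.mpr ⟨Finset.mem_univ _, (Finset.mem_filter.mp hk).2.2⟩
      · rcases sd_mem M j with h | ⟨c', hc', hcard⟩
        · rw [hj] at h; exact absurd h (Option.some_ne_none _)
        · rw [hj] at hc'
          have hcc : c = c' := Option.some_injective _ hc'
          cases hcc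
          refine lt_of_le_of_lt (Finset.card_le_card ?_) hcard
          intro k hk
          have hk' := Finset.mem_filter.mp hk
          exact Finset.mem_filter.mpr ⟨Finset.mem_univ _, lt_trans hk'.2.1 hij, hk'.2.2⟩
    have := sd_min M i (some c) (Or.inr ⟨c, rfl, hav⟩)
    exact absurd hpref (not_lt.mpr this)


/-- If the tentative assignment of `k` is `some d` then `k` applied to `d` and is held. -/
lemma tent_some {n m : ℕ} (M : Market n m) (app : Fin n → Option (Fin m)) (k : Fin n)
    (d : Fin m) (h : M.tentative app k = some d) : app k = some d ∧ M.Held app k := by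
  unfold Market.tentative at h
  by_cases hh : M.Held app k
  · rw [if_pos hh] at h; exact ⟨h, hh⟩
  · rw [if_neg hh] at h; exact absurd h.symm (Option.some_ne_none _)

/-- The key invariant: in a run of the TCDM, every student always applies to an
option weakly preferred to her assignment under any stable matching. -/
lemma tcdm_invariant {n m : ℕ} (M : Market n m) (μ : Fin n → Option (Fin m))
    (hμ : M.Stable μ) (app : ℕ → Fin n → Option (Fin m)) (hrun : M.IsRun app) :
    ∀ t j, M.rank j (app t j) ≤ M.rank j (μ j) := by
  intro t
  induction t with
  | zero => exact fun j => hrun.1 j (μ j)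
  | succ t ih =>
    intro j
    by_cases h : M.tentative (app t) j = app t j
    · rw [(hrun.2 t j).1 h]; exact ih j
    · obtain ⟨hfeas, hmin⟩ := (hrun.2 t j).2 h
      apply hmin
      cases hμj : μ j with
      | none => exact Or.inl rfl
      | some d =>
        refine Or.inr ⟨d, rfl, ?_⟩
        by_cases hc : (univ.filter fun k => M.tentative (app t) k = some d).card < M.q d
        · exact Or.inl hc
        · push_neg at hc
          set H := univ.filter fun k => M.tentative (app t) k = some d with hH
          have hjH : j ∉ H := by
            intro hjmem
            have htj := (Finset.mem_filter.mp hjmem).2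
            have := (tent_some M (app t) j d htj).2
            have : M.tentative (app t) j = app t j := by
              unfold Market.tentative; rw [if_pos this]
            exact h this
          have hex : ∃ k ∈ H, μ k ≠ some d := by
            by_contra hall
            push_neg at hall
            have hsub : insert j H ⊆ univ.filter fun k => μ k = some d := by
              intro k hk
              rcases Finset.mem_insert.mp hk with rfl | hk'
              · exact Finset.mem_filter.mpr ⟨Finset.mem_univ _, hμj⟩
              · exact Finset.mem_filter.mpr ⟨Finset.mem_univ _, hall k hk'⟩
            have h1 := Finset.card_le_card hsub
            rw [Finset.card_insert_of_notMem hjH] at h1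
            have h2 := hμ.1 d
            omega
          obtain ⟨k, hkH, hkne⟩ := hex
          have htk := (Finset.mem_filter.mp hkH).2
          have happk := (tent_some M (app t) k d htk).1
          have hle : M.rank k (some d) ≤ M.rank k (μ k) := happk ▸ ih k
          have hpref : M.Prefers k (some d) (μ k) :=
            lt_of_le_of_ne hle (fun he => hkne ((M.rank_inj k he).symm))
          have hjk : j < k := by
            by_contra hnk
            have hkj : k ≠ j := fun he => hkne (he ▸ hμj)
            have : k < j := lt_of_le_of_ne (not_lt.mp hnk) hkj
            exact hμ.2.2 k d ⟨hpref, Or.inr ⟨j, hμj, this⟩⟩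
          exact Or.inr ⟨k, htk, hjk⟩

/-- If a stable matching gives `i` her favourite college, then `i` is held at it
in every round of any run. -/
lemma tcdm_keeps_top {n m : ℕ} (M : Market n m) (μ : Fin n → Option (Fin m))
    (hμ : M.Stable μ) (app : ℕ → Fin n → Option (Fin m)) (hrun : M.IsRun app)
    (i : Fin n) (c : Fin m) (hc : μ i = some c)
    (htop : ∀ c', M.rank i (some c) ≤ M.rank i (some c')) :
    ∀ t, app t i = some c ∧ M.Held (app t) i := by
  have hheld : ∀ t, app t i = some c → M.Held (app t) i := by
    intro t happ
    refine ⟨c, happ, ?_⟩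
    have hsub : (univ.filter fun j => app t j = some c ∧ j < i)
        ⊆ univ.filter fun j => μ j = some c ∧ j < i := by
      intro j hj
      obtain ⟨-, hja, hji⟩ := Finset.mem_filter.mp hj
      refine Finset.mem_filter.mpr ⟨Finset.mem_univ _, ?_, hji⟩
      have hle : M.rank j (some c) ≤ M.rank j (μ j) := hja ▸ tcdm_invariant M μ hμ app hrun t j
      by_contra hne
      have hpref : M.Prefers j (some c) (μ j) :=
        lt_of_le_of_ne hle (fun he => hne ((M.rank_inj j he).symm))
      exact hμ.2.2 j c ⟨hpref, Or.inr ⟨i, hc, hji⟩⟩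
    have hss : (univ.filter fun j => μ j = some c ∧ j < i)
        ⊂ univ.filter fun j => μ j = some c := by
      refine Finset.ssubset_iff_of_subset ?_ |>.mpr ⟨i, ?_, ?_⟩
      · intro j hj
        exact Finset.mem_filter.mpr ⟨Finset.mem_univ _, (Finset.mem_filter.mp hj).2.1⟩
      · exact Finset.mem_filter.mpr ⟨Finset.mem_univ _, hc⟩
      · intro hmem
        exact absurd (Finset.mem_filter.mp hmem).2.2 (lt_irrefl i)
    calc (univ.filter fun j => app t j = some c ∧ j < i).card
        ≤ (univ.filter fun j => μ j = some c ∧ j < i).card := Finset.card_le_card hsub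
      _ < (univ.filter fun j => μ j = some c).card := Finset.card_lt_card hss
      _ ≤ M.q c := hμ.1 c
  intro t
  induction t with
  | zero =>
    have h0 : app 0 i = some c := by
      have hir : M.rank i (some c) < M.rank i none := hμ.2.1 i c hc
      cases he : app 0 i with
      | none =>
        have := hrun.1 i (some c)
        rw [he] at this
        omega
      | some c' =>
        have h1 := hrun.1 i (some c)
        rw [he] at h1
        have h2 := htop c'
        have : M.rank i (some c') = M.rank i (some c) := le_antisymm h1 h2
        rw [M.rank_inj i this]
    exact ⟨h0, hheld 0 h0⟩
  | succ t ih =>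
    obtain ⟨happ, hh⟩ := ih
    have htent : M.tentative (app t) i = app t i := by
      unfold Market.tentative; rw [if_pos hh]
    have := (hrun.2 t i).1 htent
    rw [happ] at this
    exact ⟨this, hheld (t + 1) this⟩

/-- with i.i.d. uniformly random strict preferences (a uniformly
random strict order of the colleges for every student, all acceptable), every
student's probability of receiving her first-choice college under the TCDM with
straightforward strategies and round limit `T ≥ 1` is at least her probability
of receiving her first choice under deferred acceptance (the unique stable
matching).  Probabilities are compared by counting preference profiles. -/
theorem tcdm_first_choice_prob_ge_DA (n m : ℕ) (q : Fin m → ℕ)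
    (T : ℕ) (hT : 1 ≤ T) (i : Fin n) :
    ((Finset.univ : Finset (Fin n → Equiv.Perm (Fin m))).filter fun P =>
        ∀ μ : Fin n → Option (Fin m), (mkMarket q P).Stable μ →
          ∃ c : Fin m, μ i = some c ∧
            ∀ c' : Fin m,
              (mkMarket q P).rank i (some c) ≤ (mkMarket q P).rank i (some c')).card
      ≤
    ((Finset.univ : Finset (Fin n → Equiv.Perm (Fin m))).filter fun P =>
        ∀ app : ℕ → Fin n → Option (Fin m), (mkMarket q P).IsRun app →
          ∃ c : Fin m, (mkMarket q P).tentative (app (T - 1)) i = some c ∧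
            ∀ c' : Fin m,
              (mkMarket q P).rank i (some c) ≤ (mkMarket q P).rank i (some c')).card := by
  refine Finset.card_le_card fun P hP => ?_
  rw [Finset.mem_filter] at hP ⊢
  refine ⟨Finset.mem_univ _, ?_⟩
  intro app hrun
  set M := mkMarket q P with hM
  have hsd := sd_stable M
  obtain ⟨c, hc, htop⟩ := hP.2 (sd M) hsd
  have hkeep := tcdm_keeps_top M (sd M) hsd app hrun i c hc htop (T - 1)
  refine ⟨c, ?_, htop⟩
  unfold Market.tentative
  rw [if_pos hkeep.2]
  exact hkeep.1
end

section
/- In the common-priority model with i.i.d. uniformly random strict preferences, for every student the probability of being assigned to her first choice under the TCDM with straightforward strategies is weakly decreasing in the round limit T, i.e., p₁(T) ≥ p₁(T+1) for all T ≥ 1. -/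
open Finset
open scoped Classical

namespace TCDMAux

/-- Count lemma: the tentatively held set at a college has at least `q` members
whenever at least `q` students apply. -/
lemma count_lemma {n : ℕ} (A : Finset (Fin n)) (q : ℕ) (hq : q ≤ A.card) :
    q ≤ (A.filter fun j => (A.filter (· < j)).card < q).card := by
  by_contra h
  push_neg at h
  set H := A.filter fun j => (A.filter (· < j)).card < q with hH
  have hne : (A \ H).Nonempty := by
    rw [sdiff_nonempty]
    intro hAH
    exact absurd (le_trans hq (card_le_card hAH)) (not_le.mpr h)
  have hj0A : (A \ H).min' hne ∈ A := (mem_sdiff.mp ((A \ H).min'_mem hne)).1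
  have hj0H : (A \ H).min' hne ∉ H := (mem_sdiff.mp ((A \ H).min'_mem hne)).2
  have hsub2 : A.filter (· < (A \ H).min' hne) ⊆ H := by
    intro k hk
    simp only [mem_filter] at hk
    by_contra hkH
    have : (A \ H).min' hne ≤ k := min'_le _ _ (mem_sdiff.mpr ⟨hk.1, hkH⟩)
    exact absurd hk.2 (not_lt.mpr this)
  have hlt : (A.filter (· < (A \ H).min' hne)).card < q :=
    lt_of_le_of_lt (card_le_card hsub2) h
  exact hj0H (mem_filter.mpr ⟨hj0A, hlt⟩)

variable {n m : ℕ}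

lemma tentative_eq_some (M : Market n m) (app : Fin n → Option (Fin m)) (j : Fin n)
    (c : Fin m) :
    M.tentative app j = some c ↔ app j = some c ∧
      (((univ : Finset (Fin n)).filter fun k => app k = some c).filter (· < j)).card
        < M.q c := by
  rw [filter_filter]
  constructor
  · intro h
    unfold Market.tentative at h
    split at h
    · next hh =>
      obtain ⟨d, hd, hcard⟩ := hh
      have hdc : d = c := by rw [h] at hd; exact (Option.some_inj.mp hd).symm
      subst hdc
      exact ⟨h, hcard⟩
    · exact absurd h (by simp)
  · rintro ⟨h1, h2⟩
    unfold Market.tentative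
    rw [if_pos ⟨c, h1, h2⟩]
    exact h1

/-- Once a college is infeasible for `i`, it stays infeasible after one step. -/
lemma step_not_feasible (M : Market n m) (app app' : Fin n → Option (Fin m))
    (hstep : M.Step app app') (i : Fin n) (c : Fin m)
    (h : ¬ M.Feasible app i c) : ¬ M.Feasible app' i c := by
  unfold Market.Feasible at h
  push_neg at h
  obtain ⟨hcard, hle⟩ := h
  -- every student tentatively held at `c` keeps applying to `c`
  have hkeep : ∀ j, M.tentative app j = some c → app' j = some c := by
    intro j hj
    have h1 := (tentative_eq_some M app j c).mp hj
    have h2 : M.tentative app j = app j := by rw [hj, h1.1]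
    rw [(hstep j).1 h2]
    exact h1.1
  set A' := (univ : Finset (Fin n)).filter fun k => app' k = some c with hA'
  have hsub : ((univ : Finset (Fin n)).filter fun j => M.tentative app j = some c) ⊆ A' := by
    intro j hj
    exact mem_filter.mpr ⟨mem_univ j, hkeep j (mem_filter.mp hj).2⟩
  have hA'card : M.q c ≤ A'.card := le_trans hcard (card_le_card hsub)
  unfold Market.Feasible
  push_neg
  constructor
  · -- held set at `c` after the step has at least `q c` members
    have heq : ((univ : Finset (Fin n)).filter fun j => M.tentative app' j = some c) =
        A'.filter fun j => (A'.filter (· < j)).card < M.q c := by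
      ext j
      simp only [hA', mem_filter, mem_univ, true_and, tentative_eq_some]
    rw [heq]
    exact count_lemma A' (M.q c) hA'card
  · -- no held student after the step has lower priority than `i`
    intro j hj
    have h1 := (tentative_eq_some M app' j c).mp hj
    by_contra hij
    push_neg at hij
    have hsub2 : ((univ : Finset (Fin n)).filter fun k => M.tentative app k = some c) ⊆
        A'.filter (· < j) := by
      intro k hk
      have hk' : M.tentative app k = some c := (mem_filter.mp hk).2
      refine mem_filter.mpr ⟨mem_filter.mpr ⟨mem_univ k, hkeep k hk'⟩, ?_⟩
      have := hle k hk'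
      show k < j
      omega
    exact absurd h1.2 (not_lt.mpr (le_trans hcard (card_le_card hsub2)))

/-- Being rejected from `c` means `c` is infeasible for you. -/
lemma rejected_not_feasible (M : Market n m) (app : Fin n → Option (Fin m))
    (i : Fin n) (c : Fin m) (happ : app i = some c)
    (hrej : M.tentative app i ≠ app i) : ¬ M.Feasible app i c := by
  set A := (univ : Finset (Fin n)).filter fun k => app k = some c with hA
  have hnh : ¬ ((A.filter (· < i)).card < M.q c) := by
    intro hlt
    exact hrej (by rw [(tentative_eq_some M app i c).mpr ⟨happ, hlt⟩, happ])
  push_neg at hnh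
  have hAcard : M.q c ≤ A.card := le_trans hnh (card_le_card (filter_subset _ _))
  unfold Market.Feasible
  push_neg
  constructor
  · have heq : ((univ : Finset (Fin n)).filter fun j => M.tentative app j = some c) =
        A.filter fun j => (A.filter (· < j)).card < M.q c := by
      ext j
      simp only [hA, mem_filter, mem_univ, true_and, tentative_eq_some]
    rw [heq]
    exact count_lemma A (M.q c) hAcard
  · intro j hj
    by_contra hij
    push_neg at hij
    have h1 := (tentative_eq_some M app j c).mp hj
    have hsub2 : A.filter (· < i) ⊆ A.filter (· < j) := by
      intro k hk
      simp only [mem_filter] at hk ⊢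
      exact ⟨hk.1, lt_trans hk.2 hij⟩
    exact absurd h1.2 (not_lt.mpr (le_trans hnh (card_le_card hsub2)))

/-- Main invariant along a run: at each round, either `i` still applies to her
round-one choice `c` and has been tentatively held at `c` in all previous
rounds, or she no longer applies to `c` and `c` is infeasible for her. -/
lemma invariant (M : Market n m) (app : ℕ → Fin n → Option (Fin m))
    (hrun : M.IsRun app) (i : Fin n) (c : Fin m) (h0 : app 0 i = some c) :
    ∀ t, (app t i = some c ∧ ∀ s < t, M.tentative (app s) i = some c) ∨
      (app t i ≠ some c ∧ ¬ M.Feasible (app t) i c) := by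
  intro t
  induction t with
  | zero => exact Or.inl ⟨h0, fun s hs => absurd hs (Nat.not_lt_zero s)⟩
  | succ t ih =>
    have hstep := hrun.2 t i
    have habs := step_not_feasible M (app t) (app (t + 1)) (hrun.2 t) i c
    rcases ih with ⟨h1, h2⟩ | ⟨h1, h2⟩
    · by_cases hk : M.tentative (app t) i = app t i
      · left
        refine ⟨(hstep.1 hk).trans h1, ?_⟩
        intro s hs
        rcases Nat.lt_succ_iff_lt_or_eq.mp hs with hs | rfl
        · exact h2 s hs
        · rw [hk, h1]
      · right
        have hnf : ¬ M.Feasible (app t) i c :=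
          rejected_not_feasible M (app t) i c h1 hk
        refine ⟨?_, habs hnf⟩
        intro hc
        rcases (hstep.2 hk).1 with hnone | ⟨d, hd, hfd⟩
        · rw [hc] at hnone; exact nomatch hnone
        · rw [hc] at hd
          exact hnf ((Option.some_inj.mp hd) ▸ hfd)
    · by_cases hk : M.tentative (app t) i = app t i
      · exact Or.inr ⟨(hstep.1 hk).symm ▸ h1, habs h2⟩
      · right
        refine ⟨?_, habs h2⟩
        intro hc
        rcases (hstep.2 hk).1 with hnone | ⟨d, hd, hfd⟩
        · rw [hc] at hnone; exact nomatch hnone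
        · rw [hc] at hd
          exact h2 ((Option.some_inj.mp hd) ▸ hfd)

end TCDMAux

/-- with i.i.d. uniformly random strict preferences, each
student's probability of receiving her first choice under the TCDM with
straightforward strategies is weakly decreasing in the round limit:
`p₁(T) ≥ p₁(T+1)` for all `T ≥ 1`. -/
theorem tcdm_first_choice_prob_antitone (n m : ℕ) (q : Fin m → ℕ)
    (T : ℕ) (hT : 1 ≤ T) (i : Fin n) :
    ((Finset.univ : Finset (Fin n → Equiv.Perm (Fin m))).filter fun P =>
        ∀ app : ℕ → Fin n → Option (Fin m), (mkMarket q P).IsRun app →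
          ∃ c : Fin m, (mkMarket q P).tentative (app (T + 1 - 1)) i = some c ∧
            ∀ c' : Fin m,
              (mkMarket q P).rank i (some c) ≤ (mkMarket q P).rank i (some c')).card
      ≤
    ((Finset.univ : Finset (Fin n → Equiv.Perm (Fin m))).filter fun P =>
        ∀ app : ℕ → Fin n → Option (Fin m), (mkMarket q P).IsRun app →
          ∃ c : Fin m, (mkMarket q P).tentative (app (T - 1)) i = some c ∧
            ∀ c' : Fin m,
              (mkMarket q P).rank i (some c) ≤ (mkMarket q P).rank i (some c')).card := by
  apply Finset.card_le_card
  intro P hP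
  simp only [mem_filter, mem_univ, true_and] at hP ⊢
  intro app hrun
  obtain ⟨c, hout, hmin⟩ := hP app hrun
  refine ⟨c, ?_, hmin⟩
  have hrank_none : (mkMarket q P).rank i none = m := rfl
  have hrank_some : ∀ d, (mkMarket q P).rank i (some d) = (P i d : ℕ) := fun _ => rfl
  -- in round one, `i` applies to her first choice `c`
  have h0 : app 0 i = some c := by
    have hr := hrun.1 i (some c)
    match h : app 0 i with
    | none =>
      rw [h, hrank_none, hrank_some] at hr
      exact absurd hr (not_le.mpr (P i c).isLt)
    | some d =>
      rw [h] at hr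
      have heq : (mkMarket q P).rank i (some d) = (mkMarket q P).rank i (some c) :=
        le_antisymm hr (hmin d)
      exact ((mkMarket q P).rank_inj i heq)
  have hout' : (mkMarket q P).tentative (app T) i = some c := by
    have : T + 1 - 1 = T := by omega
    rwa [this] at hout
  rcases TCDMAux.invariant (mkMarket q P) app hrun i c h0 T with ⟨_, h2⟩ | ⟨h1, _⟩
  · exact h2 (T - 1) (by omega)
  · exact absurd ((TCDMAux.tentative_eq_some (mkMarket q P) (app T) i c).mp hout').1 h1
end

section
/- In the common-priority model, for any preference profile and any round limit T, the set of students matched to their first choice under the TCDM with T+1 rounds and straightforward strategies is a subset of the set of students matched to their first choice under the TCDM with T rounds. -/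
open Finset
open scoped Classical

section TCDMAux

open Finset

private lemma held_card_ge_s18 {n : ℕ} (S : Finset (Fin n)) (q : ℕ) (hq : q ≤ S.card) :
    q ≤ (S.filter fun j => (S.filter (· < j)).card < q).card := by
  classical
  set f : Fin n → ℕ := fun j => (S.filter (· < j)).card with hf
  have hmono : ∀ j ∈ S, ∀ k, j < k → f j < f k := by
    intro j hj k hjk
    apply Finset.card_lt_card
    constructor
    · intro x hx
      simp only [mem_filter] at hx ⊢
      exact ⟨hx.1, hx.2.trans hjk⟩
    · intro hsub
      have hmem : j ∈ S.filter (· < k) := mem_filter.2 ⟨hj, hjk⟩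
      have := hsub hmem
      simp at this
  have hinj : Set.InjOn f S := by
    intro j hj k hk hjk
    by_contra hne
    rcases lt_or_gt_of_ne hne with hlt | hlt
    · exact absurd hjk (Nat.ne_of_lt (hmono j hj k hlt))
    · exact absurd hjk.symm (Nat.ne_of_lt (hmono k hk j hlt))
  have hlt : ∀ j ∈ S, f j < S.card := by
    intro j hj
    apply Finset.card_lt_card
    constructor
    · exact filter_subset _ _
    · intro hsub
      have := hsub hj
      simp at this
  have himg : S.image f = range S.card := by
    apply Finset.eq_of_subset_of_card_le
    · intro y hy
      rcases mem_image.1 hy with ⟨j, hj, rfl⟩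
      exact mem_range.2 (hlt j hj)
    · rw [card_range, Finset.card_image_of_injOn hinj]
  have key : (S.filter fun j => f j < q).image f = (range S.card).filter (· < q) := by
    ext y
    simp only [mem_image, mem_filter, mem_range]
    constructor
    · rintro ⟨j, ⟨hj, hjq⟩, rfl⟩
      exact ⟨hlt j hj, hjq⟩
    · rintro ⟨hy1, hy2⟩
      have : y ∈ S.image f := himg ▸ mem_range.2 hy1
      rcases mem_image.1 this with ⟨j, hj, rfl⟩
      exact ⟨j, ⟨hj, hy2⟩, rfl⟩
  have hsubrange : range q ⊆ (range S.card).filter (· < q) := by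
    intro x hx
    rw [mem_range] at hx
    exact mem_filter.2 ⟨mem_range.2 (lt_of_lt_of_le hx hq), hx⟩
  calc q = (range q).card := (card_range q).symm
    _ ≤ ((range S.card).filter (· < q)).card := card_le_card hsubrange
    _ = ((S.filter fun j => f j < q).image f).card := by rw [key]
    _ = (S.filter fun j => f j < q).card :=
        Finset.card_image_of_injOn (hinj.mono fun x hx => (mem_filter.1 hx).1)

namespace Market

variable {n m : ℕ}

private lemma tentative_eq_some_iff (M : Market n m) (app : Fin n → Option (Fin m))
    (j : Fin n) (c : Fin m) :
    M.tentative app j = some c ↔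
      j ∈ (univ.filter fun k => app k = some c) ∧
        (((univ : Finset (Fin n)).filter fun k => app k = some c).filter
          (· < j)).card < M.q c := by
  classical
  unfold tentative
  rw [Finset.filter_filter]
  split_ifs with hH
  · constructor
    · intro hj
      refine ⟨mem_filter.2 ⟨mem_univ _, hj⟩, ?_⟩
      rcases hH with ⟨c', hc', hcard⟩
      rw [hj] at hc'
      obtain rfl : c = c' := Option.some.inj hc'
      exact hcard
    · rintro ⟨hj, _⟩
      exact (mem_filter.1 hj).2
  · constructor
    · intro hnone; exact absurd hnone (by simp)
    · rintro ⟨hj, hcard⟩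
      exact absurd ⟨c, (mem_filter.1 hj).2, hcard⟩ hH

private lemma tentset_eq (M : Market n m) (app : Fin n → Option (Fin m)) (c : Fin m) :
    ((univ : Finset (Fin n)).filter fun j => M.tentative app j = some c) =
      ((univ : Finset (Fin n)).filter fun k => app k = some c).filter
        (fun j => (((univ : Finset (Fin n)).filter fun k => app k = some c).filter
          (· < j)).card < M.q c) := by
  classical
  ext j
  simp only [mem_filter, mem_univ, true_and, M.tentative_eq_some_iff app j c,
    mem_filter, mem_univ, true_and]

private lemma not_feasible_of_rejected (M : Market n m) (app : Fin n → Option (Fin m))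
    (i : Fin n) (c : Fin m) (hc : app i = some c) (hH : ¬ M.Held app i) :
    ¬ M.Feasible app i c := by
  classical
  set S : Finset (Fin n) := univ.filter fun k => app k = some c with hSdef
  have hge : M.q c ≤ (S.filter (· < i)).card := by
    by_contra hlt
    push_neg at hlt
    rw [hSdef, Finset.filter_filter] at hlt
    exact hH ⟨c, hc, hlt⟩
  have hScard : M.q c ≤ S.card := hge.trans (card_le_card (filter_subset _ _))
  intro hF
  rcases hF with hcnt | ⟨j, hj, hij⟩
  · rw [M.tentset_eq app c] at hcnt
    exact absurd hcnt (not_lt.2 (held_card_ge_s18 S (M.q c) hScard))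
  · rw [M.tentative_eq_some_iff app j c] at hj
    have hsub : S.filter (· < i) ⊆ S.filter (· < j) := by
      intro k hk
      rw [mem_filter] at hk ⊢
      exact ⟨hk.1, hk.2.trans hij⟩
    exact absurd hj.2 (not_lt.2 (hge.trans (card_le_card hsub)))

private lemma not_feasible_step (M : Market n m) (app app' : Fin n → Option (Fin m))
    (hstep : M.Step app app') (i : Fin n) (c : Fin m)
    (hnf : ¬ M.Feasible app i c) : ¬ M.Feasible app' i c := by
  classical
  obtain ⟨h1, h2⟩ := not_or.1 hnf
  set S : Finset (Fin n) := univ.filter fun k => app k = some c with hSdef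
  set H : Finset (Fin n) :=
    S.filter (fun j => (S.filter (· < j)).card < M.q c) with hHdef
  have htent : ∀ j, M.tentative app j = some c ↔ j ∈ H := by
    intro j
    rw [M.tentative_eq_some_iff app j c]
    simp only [hHdef, hSdef, mem_filter]
    try tauto
  have hHcard : M.q c ≤ H.card := by
    have := not_lt.1 h1
    rwa [M.tentset_eq app c] at this
  have hHle : ∀ j ∈ H, j ≤ i := by
    intro j hj
    by_contra hij
    exact h2 ⟨j, (htent j).2 hj, not_le.1 hij⟩
  set S' : Finset (Fin n) := univ.filter fun k => app' k = some c with hS'def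
  have hHS' : H ⊆ S' := by
    intro j hj
    have hjS : j ∈ S := (mem_filter.1 hj).1
    have hjapp : app j = some c := (mem_filter.1 hjS).2
    have ht : M.tentative app j = app j := by
      rw [(htent j).2 hj, hjapp]
    have := (hstep j).1 ht
    exact mem_filter.2 ⟨mem_univ _, by rw [this, hjapp]⟩
  have hS'card : M.q c ≤ S'.card := hHcard.trans (card_le_card hHS')
  intro hF
  rcases hF with hcnt | ⟨j, hj, hij⟩
  · rw [M.tentset_eq app' c] at hcnt
    exact absurd hcnt (not_lt.2 (held_card_ge_s18 S' (M.q c) hS'card))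
  · rw [M.tentative_eq_some_iff app' j c] at hj
    have hsub : H ⊆ S'.filter (· < j) := fun k hk =>
      mem_filter.2 ⟨hHS' hk, lt_of_le_of_lt (hHle k hk) hij⟩
    exact absurd hj.2 (not_lt.2 (hHcard.trans (card_le_card hsub)))

private lemma first_choice_invariant (M : Market n m) (app : ℕ → Fin n → Option (Fin m))
    (hrun : M.IsRun app) (i : Fin n) (c : Fin m)
    (htop : ∀ o : Option (Fin m), M.rank i (some c) ≤ M.rank i o) :
    ∀ t, app t i = some c ∨ ¬ M.Feasible (app t) i c := by
  intro t
  induction t with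
  | zero =>
    left
    exact M.rank_inj i (le_antisymm (hrun.1 i (some c)) (htop (app 0 i)))
  | succ t ih =>
    rcases ih with hc | hnf
    · by_cases hH : M.Held (app t) i
      · left
        have ht : M.tentative (app t) i = app t i := by
          unfold tentative; rw [if_pos hH]
        rw [(hrun.2 t i).1 ht, hc]
      · right
        exact M.not_feasible_step (app t) (app (t + 1)) (hrun.2 t) i c
          (M.not_feasible_of_rejected (app t) i c hc hH)
    · right
      exact M.not_feasible_step (app t) (app (t + 1)) (hrun.2 t) i c hnf

end Market

end TCDMAux

/-- for any preference profile and round limit `T ≥ 1`, every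
student matched to her first choice by the TCDM with `T + 1` rounds (outcome
`M.tentative (app T)`) is also matched to her first choice by the TCDM with `T`
rounds (outcome `M.tentative (app (T - 1))`). -/
theorem tcdm_first_choice_set_antitone (n m : ℕ) (M : Market n m)
    (app : ℕ → Fin n → Option (Fin m)) (hrun : M.IsRun app)
    (T : ℕ) (hT : 1 ≤ T) (i : Fin n) (c : Fin m)
    (htop : ∀ o : Option (Fin m), M.rank i (some c) ≤ M.rank i o)
    (h : M.tentative (app T) i = some c) :
    M.tentative (app (T - 1)) i = some c := by
  classical
  obtain ⟨t, rfl⟩ : ∃ t, T = t + 1 := ⟨T - 1, (Nat.succ_pred_eq_of_pos hT).symm⟩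
  rw [Nat.add_sub_cancel]
  have happ' : app (t + 1) i = some c := by
    by_cases hh : M.Held (app (t + 1)) i
    · unfold Market.tentative at h
      rwa [if_pos hh] at h
    · unfold Market.tentative at h
      rw [if_neg hh] at h
      exact absurd h (by simp)
  by_cases hk : M.tentative (app t) i = app t i
  · have heq : app (t + 1) i = app t i := (hrun.2 t i).1 hk
    rw [hk, ← heq, happ']
  · have hfeas : M.Feasible (app t) i c := by
      have h2 := ((hrun.2 t i).2 hk).1
      rw [happ'] at h2
      rcases h2 with h2 | ⟨c', hc', hf⟩
      · exact absurd h2 (by simp)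
      · obtain rfl : c = c' := Option.some.inj hc'
        exact hf
    rcases M.first_choice_invariant app hrun i c htop t with hc' | hnf
    · have hH : ¬ M.Held (app t) i := fun hH =>
        hk (by unfold Market.tentative; rw [if_pos hH])
      exact absurd hfeas (M.not_feasible_of_rejected (app t) i c hc' hH)
    · exact absurd hfeas hnf
end
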